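/- arXiv:2003.12922 — 4 statements merged into one kernel-verified Lean document; each statement's English description precedes it below -/
import Mathlib

section
/- Let P be the Petersen graph, i.e. the Kneser graph whose vertices are the 2-element subsets of a 5-element set, with two vertices adjacent if and only if the corresponding subsets are disjoint. Then pn(E_c(P)) = 3, where E_c denotes the complete expansion graph and pn denotes the pagenumber. -/
open SimpleGraph

/-- The vertex type of the complete expansion graph of `G`: incidence pairs `(v, e)`
with `e` an edge of `G` and `v` an endpoint of `e`. -/
abbrev IncidencePair {V : Type*} (G : SimpleGraph V) : Type _ :=
  {p : V × Sym2 V // p.2 ∈ G.edgeSet ∧ p.1 ∈ p.2}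

/-- The complete expansion graph `E_c(G)` of a simple graph `G`: vertices are the incidence
pairs `(v, e)` of `G`, and two distinct pairs `(v, e)`, `(w, f)` are adjacent iff `v = w`
or `e = f`. -/
def completeExpansion {V : Type*} (G : SimpleGraph V) : SimpleGraph (IncidencePair G) :=
  SimpleGraph.fromRel (fun x y =>
    (x : V × Sym2 V).1 = (y : V × Sym2 V).1 ∨ (x : V × Sym2 V).2 = (y : V × Sym2 V).2)

/-- With vertices placed on the spine at positions `f`, the edges `e = {a,b}` and
`e' = {c,d}` cross iff (for suitable representations) `f a < f c < f b < f d`. -/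
def edgesCross {V : Type*} (f : V → ℕ) (e e' : Sym2 V) : Prop :=
  ∃ a b c d : V, e = s(a, b) ∧ e' = s(c, d) ∧ f a < f c ∧ f c < f b ∧ f b < f d

/-- `G` admits a `k`-page book embedding: the vertices are linearly ordered along the spine
(via an injection into `ℕ`), every edge is either drawn on the spine (`none`, which is only
possible for an edge joining two consecutive vertices of the spine) or assigned to one of
`k` pages, and two edges assigned to the same page never cross. -/
def HasBookEmbedding {V : Type*} (G : SimpleGraph V) (k : ℕ) : Prop :=
  ∃ (f : V → ℕ) (page : G.edgeSet → Option (Fin k)),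
    Function.Injective f ∧
    (∀ e : G.edgeSet, page e = none →
      ∃ a b : V, (e : Sym2 V) = s(a, b) ∧ f a < f b ∧ ∀ c : V, ¬(f a < f c ∧ f c < f b)) ∧
    (∀ e e' : G.edgeSet, (page e).isSome → page e = page e' →
      ¬ edgesCross f (e : Sym2 V) (e' : Sym2 V))

/-- The pagenumber of `G`: the least number of pages of a book embedding of `G`. -/
noncomputable def pageNumber {V : Type*} (G : SimpleGraph V) : ℕ :=
  sInf {k | HasBookEmbedding G k}

/-! ### Setup: the concrete graph -/

abbrev V5 : Type := {s : Finset (Fin 5) // s.card = 2}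
abbrev PG : SimpleGraph V5 := SimpleGraph.fromRel (fun a b : V5 => Disjoint a.1 b.1)
abbrev VV : Type := IncidencePair PG
abbrev GG : SimpleGraph VV := completeExpansion PG

instance : DecidableRel PG.Adj := fun a b =>
  decidable_of_iff _ (SimpleGraph.fromRel_adj _ a b).symm
instance : DecidableRel GG.Adj := fun a b =>
  decidable_of_iff _ (SimpleGraph.fromRel_adj _ a b).symm
instance : DecidablePred (· ∈ PG.edgeSet) := fun e =>
  e.recOnSubsingleton (fun a b => decidable_of_iff (PG.Adj a b) ((SimpleGraph.mem_edgeSet PG).symm))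
instance : Fintype VV := Subtype.fintype _
instance : DecidableEq VV := fun a b => Subtype.instDecidableEq a b

def pr (a b : Fin 5) (h : ({a,b} : Finset (Fin 5)).card = 2 := by decide) : V5 := ⟨{a,b}, h⟩
def mkV (a b c d : Fin 5) (h1 : ({a,b} : Finset (Fin 5)).card = 2 := by decide)
    (h2 : ({c,d} : Finset (Fin 5)).card = 2 := by decide)
    (h : (s((pr a b h1 : V5), (pr c d h2 : V5)) ∈ PG.edgeSet) ∧
      (pr a b h1) ∈ s((pr a b h1 : V5), (pr c d h2 : V5)) := by decide) : VV :=
  ⟨(pr a b h1, s((pr a b h1 : V5), (pr c d h2 : V5))), h⟩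

/-! ### The 3-page embedding (upper bound) -/

def bitv (s : V5) : ℕ := s.1.sum (fun i => 2 ^ i.val)
def bitSym : Sym2 V5 → ℕ :=
  Sym2.lift ⟨fun a b => bitv a + bitv b, by intro a b; exact Nat.add_comm _ _⟩
def POSTBL : List (ℕ × ℕ) := [(207, 22), (215, 21), (219, 23), (335, 8), (343, 6), (349, 7), (399, 17), (407, 15), (414, 16), (591, 18), (603, 20), (605, 19), (655, 9), (667, 11), (670, 10), (783, 1), (797, 2), (798, 0), (1111, 14), (1115, 12), (1117, 13), (1175, 28), (1179, 27), (1182, 29), (1303, 3), (1309, 4), (1310, 5), (1563, 24), (1565, 26), (1566, 25)]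
def lookup (L : List (ℕ × ℕ)) (k : ℕ) : ℕ := ((L.find? (fun t => t.1 == k)).map (·.2)).getD 0
def fpos (v : VV) : ℕ := lookup POSTBL (64 * bitv v.1.1 + bitSym v.1.2)
def EPAIRS : List (ℕ × ℕ) := [(0, 1), (0, 2), (0, 29), (1, 2), (1, 22), (2, 13), (3, 4), (3, 5), (3, 21), (4, 5), (4, 19), (5, 10), (6, 7), (6, 8), (6, 28), (7, 8), (7, 26), (8, 9), (9, 10), (9, 11), (10, 11), (11, 12), (12, 13), (12, 14), (13, 14), (14, 15), (15, 16), (15, 17), (16, 17), (16, 25), (17, 18), (18, 19), (18, 20), (19, 20), (20, 27), (21, 22), (21, 23), (22, 23), (23, 24), (24, 25), (24, 26), (25, 26), (27, 28), (27, 29), (28, 29)]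
def PGTBL : List (ℕ × ℕ) := [(1, 0), (2, 2), (29, 0), (34, 0), (54, 1), (77, 2), (100, 0), (101, 2), (117, 1), (133, 0), (147, 1), (170, 1), (199, 0), (200, 1), (220, 0), (232, 0), (250, 0), (265, 0), (298, 0), (299, 2), (331, 0), (364, 0), (397, 0), (398, 0), (430, 0), (463, 0), (496, 0), (497, 1), (529, 0), (537, 0), (562, 0), (595, 0), (596, 2), (628, 0), (667, 2), (694, 0), (695, 2), (727, 0), (760, 0), (793, 0), (794, 1), (826, 0), (892, 0), (893, 1), (925, 0)]
def pgN (i j : ℕ) : ℕ := lookup PGTBL (32 * min i j + max i j)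

set_option maxHeartbeats 4000000 in
lemma lemA : ∀ a b : VV, GG.Adj a b → fpos a < fpos b → (fpos a, fpos b) ∈ EPAIRS := by decide
set_option maxHeartbeats 4000000 in
lemma lemInj : ∀ a b : VV, fpos a = fpos b → a = b := by decide
set_option maxHeartbeats 4000000 in
lemma lemB : ∀ p ∈ EPAIRS, ∀ q ∈ EPAIRS,
    pgN p.1 p.2 % 3 = pgN q.1 q.2 % 3 → ¬(p.1 < q.1 ∧ q.1 < p.2 ∧ p.2 < q.2) := by decide

lemma pgN_comm (i j : ℕ) : pgN i j = pgN j i := by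
  unfold pgN; rw [Nat.min_comm, Nat.max_comm]

def pageSym : Sym2 VV → ℕ :=
  Sym2.lift ⟨fun a b => pgN (fpos a) (fpos b), by intro a b; exact pgN_comm _ _⟩

def pageFn : GG.edgeSet → Option (Fin 3) :=
  fun e => some ⟨pageSym e.val % 3, Nat.mod_lt _ (by norm_num)⟩

lemma upper : HasBookEmbedding GG 3 := by
  refine ⟨fpos, pageFn, ?_, ?_, ?_⟩
  · intro a b h; exact lemInj a b h
  · intro e h; simp [pageFn] at h
  · rintro e e' _ hpq ⟨a, b, c, d, he, he', h1, h2, h3⟩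
    have hab : GG.Adj a b := by
      have h2' := e.2; rw [he] at h2'; exact (SimpleGraph.mem_edgeSet GG).mp h2'
    have hcd : GG.Adj c d := by
      have h2' := e'.2; rw [he'] at h2'; exact (SimpleGraph.mem_edgeSet GG).mp h2'
    have hma : (fpos a, fpos b) ∈ EPAIRS := lemA a b hab (lt_trans h1 h2)
    have hmc : (fpos c, fpos d) ∈ EPAIRS := lemA c d hcd (lt_trans h2 h3)
    have hpg : pgN (fpos a) (fpos b) % 3 = pgN (fpos c) (fpos d) % 3 := by
      have h' : pageFn e = pageFn e' := hpq
      simp only [pageFn, Option.some_inj, Fin.mk.injEq] at h'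
      rw [he, he'] at h'
      simpa only [pageSym, Sym2.lift_mk] using h'
    exact lemB _ hma _ hmc hpg ⟨h1, h2, h3⟩

/-! ### Abstract parity machinery -/

def btwZ (t a b : ℕ) : ZMod 2 := if (a < t ∧ t < b) ∨ (b < t ∧ t < a) then 1 else 0

set_option maxHeartbeats 1000000 in
lemma btw_swap {a b c d : ℕ} (hac : a ≠ c) (had : a ≠ d) (hbc : b ≠ c) (hbd : b ≠ d) :
    btwZ c a b + btwZ d a b = btwZ a c d + btwZ b c d := by
  unfold btwZ
  split_ifs <;> first | rfl | decide | (exfalso; omega)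

lemma patternsP {A B C D : ℕ} (hab : A ≠ B) (hcd : C ≠ D) (hac : A ≠ C) (had : A ≠ D)
    (hbc : B ≠ C) (hbd : B ≠ D)
    (h : ¬(((A<C∧C<B)∨(B<C∧C<A)) ↔ ((A<D∧D<B)∨(B<D∧D<A)))) :
    (A<C∧C<B∧B<D)∨(A<D∧D<B∧B<C)∨(B<C∧C<A∧A<D)∨(B<D∧D<A∧A<C)
    ∨(C<A∧A<D∧D<B)∨(C<B∧B<D∧D<A)∨(D<A∧A<C∧C<B)∨(D<B∧B<C∧C<A) := by
  by_cases h1 : (A<C∧C<B)∨(B<C∧C<A)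
  · have h2 : ¬((A<D∧D<B)∨(B<D∧D<A)) := fun hh => h ⟨fun _ => hh, fun _ => h1⟩
    rcases h1 with ⟨hAC, hCB⟩ | ⟨hBC, hCA⟩
    · rcases Nat.lt_or_ge D A with hDA | hDge
      · exact Or.inr (Or.inr (Or.inr (Or.inr (Or.inr (Or.inr (Or.inl ⟨hDA, hAC, hCB⟩))))))
      · have hBD : B < D := by omega
        exact Or.inl ⟨hAC, hCB, hBD⟩
    · rcases Nat.lt_or_ge D B with hDB | hDge
      · exact Or.inr (Or.inr (Or.inr (Or.inr (Or.inr (Or.inr (Or.inr ⟨hDB, hBC, hCA⟩))))))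
      · have hAD : A < D := by omega
        exact Or.inr (Or.inr (Or.inl ⟨hBC, hCA, hAD⟩))
  · have h2 : (A<D∧D<B)∨(B<D∧D<A) := by
      by_contra h3
      exact h ⟨fun hh => absurd hh h1, fun hh => absurd hh h3⟩
    rcases h2 with ⟨hAD, hDB⟩ | ⟨hBD, hDA⟩
    · rcases Nat.lt_or_ge C A with hCA | hCge
      · exact Or.inr (Or.inr (Or.inr (Or.inr (Or.inl ⟨hCA, hAD, hDB⟩))))
      · have hBC : B < C := by omega
        exact Or.inr (Or.inl ⟨hAD, hDB, hBC⟩)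
    · rcases Nat.lt_or_ge C B with hCB | hCge
      · exact Or.inr (Or.inr (Or.inr (Or.inr (Or.inr (Or.inl ⟨hCB, hBD, hDA⟩)))))
      · have hAC : A < C := by omega
        exact Or.inr (Or.inr (Or.inr (Or.inl ⟨hBD, hDA, hAC⟩)))

lemma btw_ne_zero {A B C D : ℕ} (h : btwZ C A B + btwZ D A B ≠ 0) :
    ¬(((A<C∧C<B)∨(B<C∧C<A)) ↔ ((A<D∧D<B)∨(B<D∧D<A))) := by
  intro hiff
  apply h
  unfold btwZ
  by_cases h1 : (A<C∧C<B)∨(B<C∧C<A)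
  · rw [if_pos h1, if_pos (hiff.mp h1)]; decide
  · rw [if_neg h1, if_neg (fun hh => h1 (hiff.mpr hh))]; decide

section Lists
variable {α : Type*} {β : Type*}

def arcs (l : List α) : List (α × α) := l.zip l.tail

lemma two_zt (z : ZMod 2) : z + z = 0 := by revert z; decide

lemma zeq_of_add {a b : ZMod 2} (h : a + b = 0) : a = b := by revert h; revert a b; decide

lemma lsum_add (l : List α) (f g : α → ZMod 2) :
    (l.map (fun x => f x + g x)).sum = (l.map f).sum + (l.map g).sum := by
  induction l with
  | nil => simp
  | cons x l ih => simp only [List.map_cons, List.sum_cons, ih]; ring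

lemma lsum_mul (l : List α) (c : ZMod 2) (f : α → ZMod 2) :
    (l.map (fun x => c * f x)).sum = c * (l.map f).sum := by
  induction l with
  | nil => simp
  | cons x l ih => simp only [List.map_cons, List.sum_cons, ih]; ring

lemma lsum_comm (l : List α) (m : List β) (F : α → β → ZMod 2) :
    (l.map (fun x => (m.map (fun y => F x y)).sum)).sum
      = (m.map (fun y => (l.map (fun x => F x y)).sum)).sum := by
  induction l with
  | nil => simp [List.sum_eq_zero]
  | cons x l ih => simp only [List.map_cons, List.sum_cons, ih, lsum_add]

lemma tele (g : α → ZMod 2) (x : α) (l : List α) :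
    ((arcs (x :: l)).map (fun s => g s.1 + g s.2)).sum = g x + g (l.getLastD x) := by
  induction l generalizing x with
  | nil => simp [arcs, (two_zt (g x)).symm]
  | cons y l ih =>
      have harc : arcs (x :: y :: l) = (x, y) :: arcs (y :: l) := rfl
      rw [harc, List.map_cons, List.sum_cons, ih y, List.getLastD_cons]
      have h2 := two_zt (g y)
      linear_combination h2

lemma arc_mem {l : List α} {s : α × α} (h : s ∈ arcs l) : s.1 ∈ l ∧ s.2 ∈ l := by
  obtain ⟨h1, h2⟩ := List.of_mem_zip (by exact h)
  exact ⟨h1, List.mem_of_mem_tail h2⟩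

lemma chain_arc {R : α → α → Prop} : ∀ {l : List α}, List.Chain' R l → ∀ s ∈ arcs l, R s.1 s.2
  | [], _, s, hs => by simp [arcs] at hs
  | [x], _, s, hs => by simp [arcs] at hs
  | (x :: y :: l), h, s, hs => by
      rw [show arcs (x :: y :: l) = (x, y) :: arcs (y :: l) from rfl] at hs
      rw [List.mem_cons] at hs
      rcases hs with hs | hs
      · subst hs; exact (List.isChain_cons_cons.mp h).1
      · exact chain_arc (List.isChain_cons_cons.mp h).2 s hs

end Lists

section Chi
variable {α : Type*} (pos : α → ℕ) (pg : α → α → ZMod 2)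

def II (s s' : α × α) : ZMod 2 :=
  btwZ (pos s'.1) (pos s.1) (pos s.2) + btwZ (pos s'.2) (pos s.1) (pos s.2)

def CR (s s' : α × α) : ZMod 2 := (1 + pg s.1 s.2 + pg s'.1 s'.2) * II pos s s'

def chi (P Q : List α) : ZMod 2 :=
  ((arcs P).map (fun s => ((arcs Q).map (fun s' => CR pos pg s s')).sum)).sum

def SS (L : List α) (t : ℕ) : ZMod 2 :=
  ((arcs L).map (fun s => pg s.1 s.2 * btwZ t (pos s.1) (pos s.2))).sum

lemma chi_zero (P Q : List α)
    (h : ∀ s ∈ arcs P, ∀ s' ∈ arcs Q, CR pos pg s s' = 0) : chi pos pg P Q = 0 := by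
  apply List.sum_eq_zero
  intro x hx
  rw [List.mem_map] at hx
  obtain ⟨s, hs, rfl⟩ := hx
  apply List.sum_eq_zero
  intro y hy
  rw [List.mem_map] at hy
  obtain ⟨s', hs', rfl⟩ := hy
  exact h s hs s' hs'

lemma chi_decomp (u v : α) (P' Q' : List α)
    (hPQ : ∀ x ∈ u :: P', ∀ y ∈ v :: Q', pos x ≠ pos y) :
    chi pos pg (u :: P') (v :: Q') =
      (btwZ (pos u) (pos v) (pos (Q'.getLastD v))
        + btwZ (pos (P'.getLastD u)) (pos v) (pos (Q'.getLastD v)))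
      + (SS pos pg (u :: P') (pos v) + SS pos pg (u :: P') (pos (Q'.getLastD v))
        + SS pos pg (v :: Q') (pos u) + SS pos pg (v :: Q') (pos (P'.getLastD u))) := by
  set P := u :: P' with hP
  set Q := v :: Q' with hQ
  set vL := Q'.getLastD v with hvL
  set uL := P'.getLastD u with huL
  have hvmem : v ∈ Q := List.mem_cons_self (a := v) (l := Q')
  have hvLmem : vL ∈ Q := List.getLastD_mem_cons (l := Q') (a := v)
  have humem : u ∈ P := List.mem_cons_self (a := u) (l := P')
  have huLmem : uL ∈ P := List.getLastD_mem_cons (l := P') (a := u)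
  have step1 : chi pos pg P Q =
      ((arcs P).map (fun s => ((arcs Q).map (fun s' => II pos s s')).sum)).sum
      + ((arcs P).map (fun s => pg s.1 s.2 * ((arcs Q).map (fun s' => II pos s s')).sum)).sum
      + ((arcs P).map (fun s => ((arcs Q).map (fun s' => pg s'.1 s'.2 * II pos s s')).sum)).sum := by
    rw [← lsum_add, ← lsum_add]
    unfold chi
    apply congrArg
    apply List.map_congr_left
    intro s _
    rw [← lsum_mul (arcs Q) (pg s.1 s.2) (fun s' => II pos s s'), ← lsum_add, ← lsum_add]
    apply congrArg
    apply List.map_congr_left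
    intro s' _
    unfold CR
    ring
  have hQtel : ∀ s : α × α, ((arcs Q).map (fun s' => II pos s s')).sum
      = btwZ (pos v) (pos s.1) (pos s.2) + btwZ (pos vL) (pos s.1) (pos s.2) := by
    intro s
    exact tele (fun y => btwZ (pos y) (pos s.1) (pos s.2)) v Q'
  have hT0 : ((arcs P).map (fun s => ((arcs Q).map (fun s' => II pos s s')).sum)).sum
      = btwZ (pos u) (pos v) (pos vL) + btwZ (pos uL) (pos v) (pos vL) := by
    have hc : (arcs P).map (fun s => ((arcs Q).map (fun s' => II pos s s')).sum)
        = (arcs P).map (fun s => btwZ (pos s.1) (pos v) (pos vL) + btwZ (pos s.2) (pos v) (pos vL)) := by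
      apply List.map_congr_left
      intro s hs
      obtain ⟨h1, h2⟩ := arc_mem hs
      rw [hQtel s]
      exact btw_swap (hPQ _ h1 _ hvmem) (hPQ _ h1 _ hvLmem) (hPQ _ h2 _ hvmem) (hPQ _ h2 _ hvLmem)
    rw [hc]
    exact tele (fun y => btwZ (pos y) (pos v) (pos vL)) u P'
  have hT1 : ((arcs P).map (fun s => pg s.1 s.2 * ((arcs Q).map (fun s' => II pos s s')).sum)).sum
      = SS pos pg P (pos v) + SS pos pg P (pos vL) := by
    have hc : (arcs P).map (fun s => pg s.1 s.2 * ((arcs Q).map (fun s' => II pos s s')).sum)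
        = (arcs P).map (fun s => pg s.1 s.2 * btwZ (pos v) (pos s.1) (pos s.2)
            + pg s.1 s.2 * btwZ (pos vL) (pos s.1) (pos s.2)) := by
      apply List.map_congr_left
      intro s _
      rw [hQtel s, mul_add]
    rw [hc, lsum_add]
    rfl
  have hT2 : ((arcs P).map (fun s => ((arcs Q).map (fun s' => pg s'.1 s'.2 * II pos s s')).sum)).sum
      = SS pos pg Q (pos u) + SS pos pg Q (pos uL) := by
    rw [lsum_comm]
    have hc : (arcs Q).map (fun s' => ((arcs P).map (fun s => pg s'.1 s'.2 * II pos s s')).sum)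
        = (arcs Q).map (fun s' => pg s'.1 s'.2 * btwZ (pos u) (pos s'.1) (pos s'.2)
            + pg s'.1 s'.2 * btwZ (pos uL) (pos s'.1) (pos s'.2)) := by
      apply List.map_congr_left
      intro s' hs'
      obtain ⟨h1', h2'⟩ := arc_mem hs'
      rw [lsum_mul]
      have hc2 : (arcs P).map (fun s => II pos s s')
          = (arcs P).map (fun s => btwZ (pos s.1) (pos s'.1) (pos s'.2)
              + btwZ (pos s.2) (pos s'.1) (pos s'.2)) := by
        apply List.map_congr_left
        intro s hs
        obtain ⟨h1, h2⟩ := arc_mem hs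
        exact btw_swap (hPQ _ h1 _ h1') (hPQ _ h1 _ h2') (hPQ _ h2 _ h1') (hPQ _ h2 _ h2')
      rw [hc2, tele (fun y => btwZ (pos y) (pos s'.1) (pos s'.2)) u P', mul_add]
    rw [hc, lsum_add]
    rfl
  rw [step1, hT0, hT1, hT2]
  ring

end Chi

/-! ### Kleitman parity on six points -/

def bigK (p : Fin 6 → ℕ) : ZMod 2 :=
  (btwZ (p 0) (p 1) (p 4) + btwZ (p 3) (p 1) (p 4))
  + (btwZ (p 0) (p 1) (p 5) + btwZ (p 3) (p 1) (p 5))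
  + (btwZ (p 0) (p 1) (p 3) + btwZ (p 4) (p 1) (p 3))
  + (btwZ (p 0) (p 1) (p 5) + btwZ (p 4) (p 1) (p 5))
  + (btwZ (p 0) (p 1) (p 3) + btwZ (p 5) (p 1) (p 3))
  + (btwZ (p 0) (p 1) (p 4) + btwZ (p 5) (p 1) (p 4))
  + (btwZ (p 0) (p 2) (p 4) + btwZ (p 3) (p 2) (p 4))
  + (btwZ (p 0) (p 2) (p 5) + btwZ (p 3) (p 2) (p 5))
  + (btwZ (p 0) (p 2) (p 3) + btwZ (p 4) (p 2) (p 3))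
  + (btwZ (p 0) (p 2) (p 5) + btwZ (p 4) (p 2) (p 5))
  + (btwZ (p 0) (p 2) (p 3) + btwZ (p 5) (p 2) (p 3))
  + (btwZ (p 0) (p 2) (p 4) + btwZ (p 5) (p 2) (p 4))
  + (btwZ (p 1) (p 2) (p 4) + btwZ (p 3) (p 2) (p 4))
  + (btwZ (p 1) (p 2) (p 5) + btwZ (p 3) (p 2) (p 5))
  + (btwZ (p 1) (p 2) (p 3) + btwZ (p 4) (p 2) (p 3))
  + (btwZ (p 1) (p 2) (p 5) + btwZ (p 4) (p 2) (p 5))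
  + (btwZ (p 1) (p 2) (p 3) + btwZ (p 5) (p 2) (p 3))
  + (btwZ (p 1) (p 2) (p 4) + btwZ (p 5) (p 2) (p 4))

set_option maxHeartbeats 2000000 in
set_option maxRecDepth 10000 in
lemma kleitman_perm : ∀ σ : Equiv.Perm (Fin 6), bigK (fun i => (σ i : ℕ)) = 1 := by decide

lemma rank6 (p : Fin 6 → ℕ) (hp : Function.Injective p) : bigK p = 1 := by
  classical
  have hcard : ∀ i : Fin 6, ((Finset.univ.filter (fun j => p j < p i)).card) < 6 := by
    intro i
    have hsub : (Finset.univ.filter (fun j => p j < p i)) ⊆ Finset.univ.erase i := by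
      intro j hj
      rw [Finset.mem_filter] at hj
      rw [Finset.mem_erase]
      refine ⟨fun h => ?_, Finset.mem_univ _⟩
      subst h; exact lt_irrefl _ hj.2
    calc (Finset.univ.filter (fun j => p j < p i)).card
        ≤ (Finset.univ.erase i).card := Finset.card_le_card hsub
      _ < 6 := by
          rw [Finset.card_erase_of_mem (Finset.mem_univ _), Finset.card_univ, Fintype.card_fin]
          norm_num
  set r : Fin 6 → Fin 6 := fun i => ⟨_, hcard i⟩ with hr
  have hlt : ∀ i j, p i < p j → (r i : ℕ) < (r j : ℕ) := by
    intro i j hij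
    show (Finset.univ.filter (fun k => p k < p i)).card < (Finset.univ.filter (fun k => p k < p j)).card
    apply Finset.card_lt_card
    rw [Finset.ssubset_def]
    constructor
    · intro k hk
      rw [Finset.mem_filter] at hk ⊢
      exact ⟨hk.1, lt_trans hk.2 hij⟩
    · intro hcon
      have hi : i ∈ Finset.univ.filter (fun k => p k < p j) := by
        rw [Finset.mem_filter]; exact ⟨Finset.mem_univ _, hij⟩
      have := hcon hi
      rw [Finset.mem_filter] at this
      exact lt_irrefl _ this.2
  have hiff : ∀ i j, (r i : ℕ) < (r j : ℕ) ↔ p i < p j := by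
    intro i j
    constructor
    · intro h
      rcases lt_trichotomy (p i) (p j) with h' | h' | h'
      · exact h'
      · exfalso; rw [hp h'] at h; exact lt_irrefl _ h
      · exact absurd (hlt _ _ h') (lt_asymm h)
    · exact hlt i j
  have hrinj : Function.Injective r := by
    intro i j hij
    apply hp
    rcases lt_trichotomy (p i) (p j) with h | h | h
    · have := (hiff i j).mpr h
      rw [hij] at this
      exact absurd this (lt_irrefl _)
    · exact h
    · have := (hiff j i).mpr h
      rw [hij] at this
      exact absurd this (lt_irrefl _)
  have hbij : Function.Bijective r := (Finite.injective_iff_bijective).mp hrinj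
  have hbtw : ∀ a b c : Fin 6, btwZ (p a) (p b) (p c) = btwZ (r a : ℕ) (r b : ℕ) (r c : ℕ) := by
    intro a b c
    unfold btwZ
    refine if_congr ?_ rfl rfl
    rw [hiff, hiff, hiff, hiff]
  have h1 : bigK p = bigK (fun i => (r i : ℕ)) := by
    unfold bigK
    simp only [hbtw]
  rw [h1]
  exact kleitman_perm (Equiv.ofBijective r hbij)

def sixfun (a b c d e f' : ℕ) : Fin 6 → ℕ
  | ⟨0, _⟩ => a
  | ⟨1, _⟩ => b
  | ⟨2, _⟩ => c
  | ⟨3, _⟩ => d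
  | ⟨4, _⟩ => e
  | ⟨5, _⟩ => f'

lemma sixfun_inj {a b c d e f' : ℕ} (h01 : a≠b) (h02 : a≠c) (h03 : a≠d) (h04 : a≠e) (h05 : a≠f')
    (h12 : b≠c) (h13 : b≠d) (h14 : b≠e) (h15 : b≠f') (h23 : c≠d) (h24 : c≠e) (h25 : c≠f')
    (h34 : d≠e) (h35 : d≠f') (h45 : e≠f') : Function.Injective (sixfun a b c d e f') := by
  intro i j hij
  fin_cases i <;> fin_cases j <;> simp_all [sixfun]

/-! ### The lower bound: no 2-page embedding -/

def x01_23 : VV := mkV 0 1 2 3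
def x01_24 : VV := mkV 0 1 2 4
def x01_34 : VV := mkV 0 1 3 4
def x02_13 : VV := mkV 0 2 1 3
def x02_14 : VV := mkV 0 2 1 4
def x02_34 : VV := mkV 0 2 3 4
def x03_12 : VV := mkV 0 3 1 2
def x03_14 : VV := mkV 0 3 1 4
def x03_24 : VV := mkV 0 3 2 4
def x12_03 : VV := mkV 1 2 0 3
def x12_34 : VV := mkV 1 2 3 4
def x13_02 : VV := mkV 1 3 0 2
def x13_24 : VV := mkV 1 3 2 4
def x14_02 : VV := mkV 1 4 0 2
def x14_03 : VV := mkV 1 4 0 3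
def x14_23 : VV := mkV 1 4 2 3
def x23_01 : VV := mkV 2 3 0 1
def x23_14 : VV := mkV 2 3 1 4
def x24_01 : VV := mkV 2 4 0 1
def x24_03 : VV := mkV 2 4 0 3
def x24_13 : VV := mkV 2 4 1 3
def x34_01 : VV := mkV 3 4 0 1
def x34_02 : VV := mkV 3 4 0 2
def x34_12 : VV := mkV 3 4 1 2

def pgv (page : GG.edgeSet → Option (Fin 2)) : VV → VV → ZMod 2 := fun x y =>
  if h : GG.Adj x y then
    (if page ⟨s(x, y), (SimpleGraph.mem_edgeSet GG).mpr h⟩ = some 1 then 1 else 0)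
  else 0

lemma key (f : VV → ℕ) (page : GG.edgeSet → Option (Fin 2))
    (hinj : Function.Injective f)
    (hnone : ∀ e : GG.edgeSet, page e = none →
      ∃ a b : VV, (e : Sym2 VV) = s(a, b) ∧ f a < f b ∧ ∀ c : VV, ¬(f a < f c ∧ f c < f b))
    (hcross : ∀ e e' : GG.edgeSet, (page e).isSome → page e = page e' →
      ¬ edgesCross f (e : Sym2 VV) (e' : Sym2 VV))
    (a b c d : VV) (hab : GG.Adj a b) (hcd : GG.Adj c d)
    (hac : a ≠ c) (had : a ≠ d) (hbc : b ≠ c) (hbd : b ≠ d) :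
    CR f (pgv page) (a, b) (c, d) = 0 := by
  have hfab : f a ≠ f b := fun h => hab.ne (hinj h)
  have hfcd : f c ≠ f d := fun h => hcd.ne (hinj h)
  have hfac : f a ≠ f c := fun h => hac (hinj h)
  have hfad : f a ≠ f d := fun h => had (hinj h)
  have hfbc : f b ≠ f c := fun h => hbc (hinj h)
  have hfbd : f b ≠ f d := fun h => hbd (hinj h)
  unfold CR
  by_cases hz : II f ((a, b) : VV × VV) ((c, d) : VV × VV) = 0
  · rw [hz, mul_zero]
  · have hz' : btwZ (f c) (f a) (f b) + btwZ (f d) (f a) (f b) ≠ 0 := hz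
    have pats := patternsP hfab hfcd hfac hfad hfbc hfbd (btw_ne_zero hz')
    set e : GG.edgeSet := ⟨s(a, b), (SimpleGraph.mem_edgeSet GG).mpr hab⟩ with he
    set e' : GG.edgeSet := ⟨s(c, d), (SimpleGraph.mem_edgeSet GG).mpr hcd⟩ with he'
    have hpgv1 : pgv page a b = (if page e = some 1 then 1 else 0) := by
      unfold pgv; rw [dif_pos hab]
    have hpgv2 : pgv page c d = (if page e' = some 1 then 1 else 0) := by
      unfold pgv; rw [dif_pos hcd]
    rcases hpe : page e with _ | p
    · exfalso
      obtain ⟨a', b', heq, hlt, hno⟩ := hnone e hpe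
      have heq' : s(a, b) = s(a', b') := heq
      rw [Sym2.eq_iff] at heq'
      rcases heq' with ⟨h1, h2⟩ | ⟨h1, h2⟩ <;> subst h1 <;> subst h2 <;>
        rcases pats with pt|pt|pt|pt|pt|pt|pt|pt <;>
        first
          | omega
          | exact hno c ⟨by omega, by omega⟩
          | exact hno d ⟨by omega, by omega⟩
    · rcases hpe' : page e' with _ | q
      · exfalso
        obtain ⟨c', d', heq, hlt, hno⟩ := hnone e' hpe'
        have heq' : s(c, d) = s(c', d') := heq
        rw [Sym2.eq_iff] at heq'
        rcases heq' with ⟨h1, h2⟩ | ⟨h1, h2⟩ <;> subst h1 <;> subst h2 <;>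
          rcases pats with pt|pt|pt|pt|pt|pt|pt|pt <;>
          first
            | omega
            | exact hno a ⟨by omega, by omega⟩
            | exact hno b ⟨by omega, by omega⟩
      · by_cases hpq : p = q
        · exfalso
          subst hpq
          have hs : (page e).isSome := by rw [hpe]; rfl
          have hpp : page e = page e' := by rw [hpe, hpe']
          have hcr := hcross e e' hs hpp
          have hcr' := hcross e' e (by rw [hpe']; rfl) hpp.symm
          rcases pats with ⟨p1,p2,p3⟩|⟨p1,p2,p3⟩|⟨p1,p2,p3⟩|⟨p1,p2,p3⟩|⟨p1,p2,p3⟩|⟨p1,p2,p3⟩|⟨p1,p2,p3⟩|⟨p1,p2,p3⟩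
          · exact hcr ⟨a, b, c, d, rfl, rfl, p1, p2, p3⟩
          · exact hcr ⟨a, b, d, c, rfl, Sym2.eq_swap, p1, p2, p3⟩
          · exact hcr ⟨b, a, c, d, Sym2.eq_swap, rfl, p1, p2, p3⟩
          · exact hcr ⟨b, a, d, c, Sym2.eq_swap, Sym2.eq_swap, p1, p2, p3⟩
          · exact hcr' ⟨c, d, a, b, rfl, rfl, p1, p2, p3⟩
          · exact hcr' ⟨c, d, b, a, rfl, Sym2.eq_swap, p1, p2, p3⟩
          · exact hcr' ⟨d, c, a, b, Sym2.eq_swap, rfl, p1, p2, p3⟩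
          · exact hcr' ⟨d, c, b, a, Sym2.eq_swap, Sym2.eq_swap, p1, p2, p3⟩
        · have hfac0 : (1 + pgv page a b + pgv page c d) = 0 := by
            rw [hpgv1, hpgv2, hpe, hpe']
            fin_cases p <;> fin_cases q <;>
              first
                | exact absurd rfl hpq
                | decide
          rw [hfac0, zero_mul]

set_option maxHeartbeats 4000000 in
set_option maxRecDepth 100000 in
lemma no2 : ¬ HasBookEmbedding GG 2 := by
  rintro ⟨f, page, hinj, hnone, hcross⟩
  set pgp : VV → VV → ZMod 2 := pgv page with hpgp
  have hposd : ∀ (P Q : List VV), (∀ x ∈ P, ∀ y ∈ Q, x ≠ y) →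
      ∀ x ∈ P, ∀ y ∈ Q, f x ≠ f y :=
    fun P Q h x hx y hy hf => h x hx y hy (hinj hf)
  have hchiz : ∀ (P Q : List VV), (∀ s ∈ arcs P, GG.Adj s.1 s.2) →
      (∀ s ∈ arcs Q, GG.Adj s.1 s.2) →
      (∀ x ∈ P, ∀ y ∈ Q, x ≠ y) → chi f pgp P Q = 0 := by
    intro P Q hP hQ hd
    apply chi_zero
    intro s hs s' hs'
    obtain ⟨h1, h2⟩ := arc_mem hs
    obtain ⟨h1', h2'⟩ := arc_mem hs'
    exact key f page hinj hnone hcross s.1 s.2 s'.1 s'.2 (hP s hs)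
      (hQ s' hs') (hd _ h1 _ h1') (hd _ h1 _ h2') (hd _ h2 _ h1') (hd _ h2 _ h2')
  have hpr0 : btwZ (f x01_23) (f x02_13) (f x24_01) + btwZ (f x14_02) (f x02_13) (f x24_01) = SS f pgp [x01_23, x23_01, x23_14, x14_23, x14_02] (f x02_13) + SS f pgp [x01_23, x23_01, x23_14, x14_23, x14_02] (f x24_01) + SS f pgp [x02_13, x13_02, x13_24, x24_13, x24_01] (f x01_23) + SS f pgp [x02_13, x13_02, x13_24, x24_13, x24_01] (f x14_02) := by
    have hdec := chi_decomp f pgp x01_23 x02_13 [x23_01, x23_14, x14_23, x14_02] [x13_02, x13_24, x24_13, x24_01]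
      (hposd [x01_23, x23_01, x23_14, x14_23, x14_02] [x02_13, x13_02, x13_24, x24_13, x24_01] (by intro x hx y hy; fin_cases hx <;> fin_cases hy <;> decide))
    have hz := hchiz [x01_23, x23_01, x23_14, x14_23, x14_02] [x02_13, x13_02, x13_24, x24_13, x24_01] (by intro s hs; fin_cases hs <;> decide)
      (by intro s hs; fin_cases hs <;> decide)
      (by intro x hx y hy; fin_cases hx <;> fin_cases hy <;> decide)
    rw [hdec] at hz
    exact zeq_of_add hz
  have hpr1 : btwZ (f x01_23) (f x02_13) (f x34_01) + btwZ (f x14_02) (f x02_13) (f x34_01) = SS f pgp [x01_23, x23_01, x23_14, x14_23, x14_02] (f x02_13) + SS f pgp [x01_23, x23_01, x23_14, x14_23, x14_02] (f x34_01) + SS f pgp [x02_13, x02_34, x34_02, x34_01] (f x01_23) + SS f pgp [x02_13, x02_34, x34_02, x34_01] (f x14_02) := by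
    have hdec := chi_decomp f pgp x01_23 x02_13 [x23_01, x23_14, x14_23, x14_02] [x02_34, x34_02, x34_01]
      (hposd [x01_23, x23_01, x23_14, x14_23, x14_02] [x02_13, x02_34, x34_02, x34_01] (by intro x hx y hy; fin_cases hx <;> fin_cases hy <;> decide))
    have hz := hchiz [x01_23, x23_01, x23_14, x14_23, x14_02] [x02_13, x02_34, x34_02, x34_01] (by intro s hs; fin_cases hs <;> decide)
      (by intro s hs; fin_cases hs <;> decide)
      (by intro x hx y hy; fin_cases hx <;> fin_cases hy <;> decide)
    rw [hdec] at hz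
    exact zeq_of_add hz
  have hpr2 : btwZ (f x01_23) (f x02_13) (f x14_02) + btwZ (f x24_01) (f x02_13) (f x14_02) = SS f pgp [x01_23, x01_24, x24_01] (f x02_13) + SS f pgp [x01_23, x01_24, x24_01] (f x14_02) + SS f pgp [x02_13, x02_14, x14_02] (f x01_23) + SS f pgp [x02_13, x02_14, x14_02] (f x24_01) := by
    have hdec := chi_decomp f pgp x01_23 x02_13 [x01_24, x24_01] [x02_14, x14_02]
      (hposd [x01_23, x01_24, x24_01] [x02_13, x02_14, x14_02] (by intro x hx y hy; fin_cases hx <;> fin_cases hy <;> decide))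
    have hz := hchiz [x01_23, x01_24, x24_01] [x02_13, x02_14, x14_02] (by intro s hs; fin_cases hs <;> decide)
      (by intro s hs; fin_cases hs <;> decide)
      (by intro x hx y hy; fin_cases hx <;> fin_cases hy <;> decide)
    rw [hdec] at hz
    exact zeq_of_add hz
  have hpr3 : btwZ (f x01_23) (f x02_13) (f x34_01) + btwZ (f x24_01) (f x02_13) (f x34_01) = SS f pgp [x01_23, x01_24, x24_01] (f x02_13) + SS f pgp [x01_23, x01_24, x24_01] (f x34_01) + SS f pgp [x02_13, x02_34, x34_02, x34_01] (f x01_23) + SS f pgp [x02_13, x02_34, x34_02, x34_01] (f x24_01) := by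
    have hdec := chi_decomp f pgp x01_23 x02_13 [x01_24, x24_01] [x02_34, x34_02, x34_01]
      (hposd [x01_23, x01_24, x24_01] [x02_13, x02_34, x34_02, x34_01] (by intro x hx y hy; fin_cases hx <;> fin_cases hy <;> decide))
    have hz := hchiz [x01_23, x01_24, x24_01] [x02_13, x02_34, x34_02, x34_01] (by intro s hs; fin_cases hs <;> decide)
      (by intro s hs; fin_cases hs <;> decide)
      (by intro x hx y hy; fin_cases hx <;> fin_cases hy <;> decide)
    rw [hdec] at hz
    exact zeq_of_add hz
  have hpr4 : btwZ (f x01_23) (f x02_13) (f x14_02) + btwZ (f x34_01) (f x02_13) (f x14_02) = SS f pgp [x01_23, x01_34, x34_01] (f x02_13) + SS f pgp [x01_23, x01_34, x34_01] (f x14_02) + SS f pgp [x02_13, x02_14, x14_02] (f x01_23) + SS f pgp [x02_13, x02_14, x14_02] (f x34_01) := by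
    have hdec := chi_decomp f pgp x01_23 x02_13 [x01_34, x34_01] [x02_14, x14_02]
      (hposd [x01_23, x01_34, x34_01] [x02_13, x02_14, x14_02] (by intro x hx y hy; fin_cases hx <;> fin_cases hy <;> decide))
    have hz := hchiz [x01_23, x01_34, x34_01] [x02_13, x02_14, x14_02] (by intro s hs; fin_cases hs <;> decide)
      (by intro s hs; fin_cases hs <;> decide)
      (by intro x hx y hy; fin_cases hx <;> fin_cases hy <;> decide)
    rw [hdec] at hz
    exact zeq_of_add hz
  have hpr5 : btwZ (f x01_23) (f x02_13) (f x24_01) + btwZ (f x34_01) (f x02_13) (f x24_01) = SS f pgp [x01_23, x01_34, x34_01] (f x02_13) + SS f pgp [x01_23, x01_34, x34_01] (f x24_01) + SS f pgp [x02_13, x13_02, x13_24, x24_13, x24_01] (f x01_23) + SS f pgp [x02_13, x13_02, x13_24, x24_13, x24_01] (f x34_01) := by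
    have hdec := chi_decomp f pgp x01_23 x02_13 [x01_34, x34_01] [x13_02, x13_24, x24_13, x24_01]
      (hposd [x01_23, x01_34, x34_01] [x02_13, x13_02, x13_24, x24_13, x24_01] (by intro x hx y hy; fin_cases hx <;> fin_cases hy <;> decide))
    have hz := hchiz [x01_23, x01_34, x34_01] [x02_13, x13_02, x13_24, x24_13, x24_01] (by intro s hs; fin_cases hs <;> decide)
      (by intro s hs; fin_cases hs <;> decide)
      (by intro x hx y hy; fin_cases hx <;> fin_cases hy <;> decide)
    rw [hdec] at hz
    exact zeq_of_add hz
  have hpr6 : btwZ (f x01_23) (f x03_12) (f x24_01) + btwZ (f x14_02) (f x03_12) (f x24_01) = SS f pgp [x01_23, x23_01, x23_14, x14_23, x14_02] (f x03_12) + SS f pgp [x01_23, x23_01, x23_14, x14_23, x14_02] (f x24_01) + SS f pgp [x03_12, x03_24, x24_03, x24_01] (f x01_23) + SS f pgp [x03_12, x03_24, x24_03, x24_01] (f x14_02) := by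
    have hdec := chi_decomp f pgp x01_23 x03_12 [x23_01, x23_14, x14_23, x14_02] [x03_24, x24_03, x24_01]
      (hposd [x01_23, x23_01, x23_14, x14_23, x14_02] [x03_12, x03_24, x24_03, x24_01] (by intro x hx y hy; fin_cases hx <;> fin_cases hy <;> decide))
    have hz := hchiz [x01_23, x23_01, x23_14, x14_23, x14_02] [x03_12, x03_24, x24_03, x24_01] (by intro s hs; fin_cases hs <;> decide)
      (by intro s hs; fin_cases hs <;> decide)
      (by intro x hx y hy; fin_cases hx <;> fin_cases hy <;> decide)
    rw [hdec] at hz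
    exact zeq_of_add hz
  have hpr7 : btwZ (f x01_23) (f x03_12) (f x34_01) + btwZ (f x14_02) (f x03_12) (f x34_01) = SS f pgp [x01_23, x23_01, x23_14, x14_23, x14_02] (f x03_12) + SS f pgp [x01_23, x23_01, x23_14, x14_23, x14_02] (f x34_01) + SS f pgp [x03_12, x12_03, x12_34, x34_12, x34_01] (f x01_23) + SS f pgp [x03_12, x12_03, x12_34, x34_12, x34_01] (f x14_02) := by
    have hdec := chi_decomp f pgp x01_23 x03_12 [x23_01, x23_14, x14_23, x14_02] [x12_03, x12_34, x34_12, x34_01]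
      (hposd [x01_23, x23_01, x23_14, x14_23, x14_02] [x03_12, x12_03, x12_34, x34_12, x34_01] (by intro x hx y hy; fin_cases hx <;> fin_cases hy <;> decide))
    have hz := hchiz [x01_23, x23_01, x23_14, x14_23, x14_02] [x03_12, x12_03, x12_34, x34_12, x34_01] (by intro s hs; fin_cases hs <;> decide)
      (by intro s hs; fin_cases hs <;> decide)
      (by intro x hx y hy; fin_cases hx <;> fin_cases hy <;> decide)
    rw [hdec] at hz
    exact zeq_of_add hz
  have hpr8 : btwZ (f x01_23) (f x03_12) (f x14_02) + btwZ (f x24_01) (f x03_12) (f x14_02) = SS f pgp [x01_23, x01_24, x24_01] (f x03_12) + SS f pgp [x01_23, x01_24, x24_01] (f x14_02) + SS f pgp [x03_12, x03_14, x14_03, x14_02] (f x01_23) + SS f pgp [x03_12, x03_14, x14_03, x14_02] (f x24_01) := by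
    have hdec := chi_decomp f pgp x01_23 x03_12 [x01_24, x24_01] [x03_14, x14_03, x14_02]
      (hposd [x01_23, x01_24, x24_01] [x03_12, x03_14, x14_03, x14_02] (by intro x hx y hy; fin_cases hx <;> fin_cases hy <;> decide))
    have hz := hchiz [x01_23, x01_24, x24_01] [x03_12, x03_14, x14_03, x14_02] (by intro s hs; fin_cases hs <;> decide)
      (by intro s hs; fin_cases hs <;> decide)
      (by intro x hx y hy; fin_cases hx <;> fin_cases hy <;> decide)
    rw [hdec] at hz
    exact zeq_of_add hz
  have hpr9 : btwZ (f x01_23) (f x03_12) (f x34_01) + btwZ (f x24_01) (f x03_12) (f x34_01) = SS f pgp [x01_23, x01_24, x24_01] (f x03_12) + SS f pgp [x01_23, x01_24, x24_01] (f x34_01) + SS f pgp [x03_12, x12_03, x12_34, x34_12, x34_01] (f x01_23) + SS f pgp [x03_12, x12_03, x12_34, x34_12, x34_01] (f x24_01) := by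
    have hdec := chi_decomp f pgp x01_23 x03_12 [x01_24, x24_01] [x12_03, x12_34, x34_12, x34_01]
      (hposd [x01_23, x01_24, x24_01] [x03_12, x12_03, x12_34, x34_12, x34_01] (by intro x hx y hy; fin_cases hx <;> fin_cases hy <;> decide))
    have hz := hchiz [x01_23, x01_24, x24_01] [x03_12, x12_03, x12_34, x34_12, x34_01] (by intro s hs; fin_cases hs <;> decide)
      (by intro s hs; fin_cases hs <;> decide)
      (by intro x hx y hy; fin_cases hx <;> fin_cases hy <;> decide)
    rw [hdec] at hz
    exact zeq_of_add hz
  have hpr10 : btwZ (f x01_23) (f x03_12) (f x14_02) + btwZ (f x34_01) (f x03_12) (f x14_02) = SS f pgp [x01_23, x01_34, x34_01] (f x03_12) + SS f pgp [x01_23, x01_34, x34_01] (f x14_02) + SS f pgp [x03_12, x03_14, x14_03, x14_02] (f x01_23) + SS f pgp [x03_12, x03_14, x14_03, x14_02] (f x34_01) := by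
    have hdec := chi_decomp f pgp x01_23 x03_12 [x01_34, x34_01] [x03_14, x14_03, x14_02]
      (hposd [x01_23, x01_34, x34_01] [x03_12, x03_14, x14_03, x14_02] (by intro x hx y hy; fin_cases hx <;> fin_cases hy <;> decide))
    have hz := hchiz [x01_23, x01_34, x34_01] [x03_12, x03_14, x14_03, x14_02] (by intro s hs; fin_cases hs <;> decide)
      (by intro s hs; fin_cases hs <;> decide)
      (by intro x hx y hy; fin_cases hx <;> fin_cases hy <;> decide)
    rw [hdec] at hz
    exact zeq_of_add hz
  have hpr11 : btwZ (f x01_23) (f x03_12) (f x24_01) + btwZ (f x34_01) (f x03_12) (f x24_01) = SS f pgp [x01_23, x01_34, x34_01] (f x03_12) + SS f pgp [x01_23, x01_34, x34_01] (f x24_01) + SS f pgp [x03_12, x03_24, x24_03, x24_01] (f x01_23) + SS f pgp [x03_12, x03_24, x24_03, x24_01] (f x34_01) := by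
    have hdec := chi_decomp f pgp x01_23 x03_12 [x01_34, x34_01] [x03_24, x24_03, x24_01]
      (hposd [x01_23, x01_34, x34_01] [x03_12, x03_24, x24_03, x24_01] (by intro x hx y hy; fin_cases hx <;> fin_cases hy <;> decide))
    have hz := hchiz [x01_23, x01_34, x34_01] [x03_12, x03_24, x24_03, x24_01] (by intro s hs; fin_cases hs <;> decide)
      (by intro s hs; fin_cases hs <;> decide)
      (by intro x hx y hy; fin_cases hx <;> fin_cases hy <;> decide)
    rw [hdec] at hz
    exact zeq_of_add hz
  have hpr12 : btwZ (f x02_13) (f x03_12) (f x24_01) + btwZ (f x14_02) (f x03_12) (f x24_01) = SS f pgp [x02_13, x02_14, x14_02] (f x03_12) + SS f pgp [x02_13, x02_14, x14_02] (f x24_01) + SS f pgp [x03_12, x03_24, x24_03, x24_01] (f x02_13) + SS f pgp [x03_12, x03_24, x24_03, x24_01] (f x14_02) := by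
    have hdec := chi_decomp f pgp x02_13 x03_12 [x02_14, x14_02] [x03_24, x24_03, x24_01]
      (hposd [x02_13, x02_14, x14_02] [x03_12, x03_24, x24_03, x24_01] (by intro x hx y hy; fin_cases hx <;> fin_cases hy <;> decide))
    have hz := hchiz [x02_13, x02_14, x14_02] [x03_12, x03_24, x24_03, x24_01] (by intro s hs; fin_cases hs <;> decide)
      (by intro s hs; fin_cases hs <;> decide)
      (by intro x hx y hy; fin_cases hx <;> fin_cases hy <;> decide)
    rw [hdec] at hz
    exact zeq_of_add hz
  have hpr13 : btwZ (f x02_13) (f x03_12) (f x34_01) + btwZ (f x14_02) (f x03_12) (f x34_01) = SS f pgp [x02_13, x02_14, x14_02] (f x03_12) + SS f pgp [x02_13, x02_14, x14_02] (f x34_01) + SS f pgp [x03_12, x12_03, x12_34, x34_12, x34_01] (f x02_13) + SS f pgp [x03_12, x12_03, x12_34, x34_12, x34_01] (f x14_02) := by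
    have hdec := chi_decomp f pgp x02_13 x03_12 [x02_14, x14_02] [x12_03, x12_34, x34_12, x34_01]
      (hposd [x02_13, x02_14, x14_02] [x03_12, x12_03, x12_34, x34_12, x34_01] (by intro x hx y hy; fin_cases hx <;> fin_cases hy <;> decide))
    have hz := hchiz [x02_13, x02_14, x14_02] [x03_12, x12_03, x12_34, x34_12, x34_01] (by intro s hs; fin_cases hs <;> decide)
      (by intro s hs; fin_cases hs <;> decide)
      (by intro x hx y hy; fin_cases hx <;> fin_cases hy <;> decide)
    rw [hdec] at hz
    exact zeq_of_add hz
  have hpr14 : btwZ (f x02_13) (f x03_12) (f x14_02) + btwZ (f x24_01) (f x03_12) (f x14_02) = SS f pgp [x02_13, x13_02, x13_24, x24_13, x24_01] (f x03_12) + SS f pgp [x02_13, x13_02, x13_24, x24_13, x24_01] (f x14_02) + SS f pgp [x03_12, x03_14, x14_03, x14_02] (f x02_13) + SS f pgp [x03_12, x03_14, x14_03, x14_02] (f x24_01) := by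
    have hdec := chi_decomp f pgp x02_13 x03_12 [x13_02, x13_24, x24_13, x24_01] [x03_14, x14_03, x14_02]
      (hposd [x02_13, x13_02, x13_24, x24_13, x24_01] [x03_12, x03_14, x14_03, x14_02] (by intro x hx y hy; fin_cases hx <;> fin_cases hy <;> decide))
    have hz := hchiz [x02_13, x13_02, x13_24, x24_13, x24_01] [x03_12, x03_14, x14_03, x14_02] (by intro s hs; fin_cases hs <;> decide)
      (by intro s hs; fin_cases hs <;> decide)
      (by intro x hx y hy; fin_cases hx <;> fin_cases hy <;> decide)
    rw [hdec] at hz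
    exact zeq_of_add hz
  have hpr15 : btwZ (f x02_13) (f x03_12) (f x34_01) + btwZ (f x24_01) (f x03_12) (f x34_01) = SS f pgp [x02_13, x13_02, x13_24, x24_13, x24_01] (f x03_12) + SS f pgp [x02_13, x13_02, x13_24, x24_13, x24_01] (f x34_01) + SS f pgp [x03_12, x12_03, x12_34, x34_12, x34_01] (f x02_13) + SS f pgp [x03_12, x12_03, x12_34, x34_12, x34_01] (f x24_01) := by
    have hdec := chi_decomp f pgp x02_13 x03_12 [x13_02, x13_24, x24_13, x24_01] [x12_03, x12_34, x34_12, x34_01]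
      (hposd [x02_13, x13_02, x13_24, x24_13, x24_01] [x03_12, x12_03, x12_34, x34_12, x34_01] (by intro x hx y hy; fin_cases hx <;> fin_cases hy <;> decide))
    have hz := hchiz [x02_13, x13_02, x13_24, x24_13, x24_01] [x03_12, x12_03, x12_34, x34_12, x34_01] (by intro s hs; fin_cases hs <;> decide)
      (by intro s hs; fin_cases hs <;> decide)
      (by intro x hx y hy; fin_cases hx <;> fin_cases hy <;> decide)
    rw [hdec] at hz
    exact zeq_of_add hz
  have hpr16 : btwZ (f x02_13) (f x03_12) (f x14_02) + btwZ (f x34_01) (f x03_12) (f x14_02) = SS f pgp [x02_13, x02_34, x34_02, x34_01] (f x03_12) + SS f pgp [x02_13, x02_34, x34_02, x34_01] (f x14_02) + SS f pgp [x03_12, x03_14, x14_03, x14_02] (f x02_13) + SS f pgp [x03_12, x03_14, x14_03, x14_02] (f x34_01) := by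
    have hdec := chi_decomp f pgp x02_13 x03_12 [x02_34, x34_02, x34_01] [x03_14, x14_03, x14_02]
      (hposd [x02_13, x02_34, x34_02, x34_01] [x03_12, x03_14, x14_03, x14_02] (by intro x hx y hy; fin_cases hx <;> fin_cases hy <;> decide))
    have hz := hchiz [x02_13, x02_34, x34_02, x34_01] [x03_12, x03_14, x14_03, x14_02] (by intro s hs; fin_cases hs <;> decide)
      (by intro s hs; fin_cases hs <;> decide)
      (by intro x hx y hy; fin_cases hx <;> fin_cases hy <;> decide)
    rw [hdec] at hz
    exact zeq_of_add hz
  have hpr17 : btwZ (f x02_13) (f x03_12) (f x24_01) + btwZ (f x34_01) (f x03_12) (f x24_01) = SS f pgp [x02_13, x02_34, x34_02, x34_01] (f x03_12) + SS f pgp [x02_13, x02_34, x34_02, x34_01] (f x24_01) + SS f pgp [x03_12, x03_24, x24_03, x24_01] (f x02_13) + SS f pgp [x03_12, x03_24, x24_03, x24_01] (f x34_01) := by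
    have hdec := chi_decomp f pgp x02_13 x03_12 [x02_34, x34_02, x34_01] [x03_24, x24_03, x24_01]
      (hposd [x02_13, x02_34, x34_02, x34_01] [x03_12, x03_24, x24_03, x24_01] (by intro x hx y hy; fin_cases hx <;> fin_cases hy <;> decide))
    have hz := hchiz [x02_13, x02_34, x34_02, x34_01] [x03_12, x03_24, x24_03, x24_01] (by intro s hs; fin_cases hs <;> decide)
      (by intro s hs; fin_cases hs <;> decide)
      (by intro x hx y hy; fin_cases hx <;> fin_cases hy <;> decide)
    rw [hdec] at hz
    exact zeq_of_add hz
  have hbrinj : Function.Injective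
      (sixfun (f x01_23) (f x02_13) (f x03_12) (f x14_02) (f x24_01) (f x34_01)) :=
    sixfun_inj (fun h => absurd (hinj h) (by decide)) (fun h => absurd (hinj h) (by decide))
      (fun h => absurd (hinj h) (by decide)) (fun h => absurd (hinj h) (by decide))
      (fun h => absurd (hinj h) (by decide)) (fun h => absurd (hinj h) (by decide))
      (fun h => absurd (hinj h) (by decide)) (fun h => absurd (hinj h) (by decide))
      (fun h => absurd (hinj h) (by decide)) (fun h => absurd (hinj h) (by decide))
      (fun h => absurd (hinj h) (by decide)) (fun h => absurd (hinj h) (by decide))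
      (fun h => absurd (hinj h) (by decide)) (fun h => absurd (hinj h) (by decide))
      (fun h => absurd (hinj h) (by decide))
  have hk := rank6 _ hbrinj
  simp only [bigK, sixfun] at hk
  rw [hpr0, hpr1, hpr2, hpr3, hpr4, hpr5, hpr6, hpr7, hpr8, hpr9, hpr10, hpr11, hpr12, hpr13, hpr14, hpr15, hpr16, hpr17] at hk
  have hSzero : (SS f pgp [x01_23, x23_01, x23_14, x14_23, x14_02] (f x02_13) + SS f pgp [x01_23, x23_01, x23_14, x14_23, x14_02] (f x24_01) + SS f pgp [x02_13, x13_02, x13_24, x24_13, x24_01] (f x01_23) + SS f pgp [x02_13, x13_02, x13_24, x24_13, x24_01] (f x14_02))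
      + (SS f pgp [x01_23, x23_01, x23_14, x14_23, x14_02] (f x02_13) + SS f pgp [x01_23, x23_01, x23_14, x14_23, x14_02] (f x34_01) + SS f pgp [x02_13, x02_34, x34_02, x34_01] (f x01_23) + SS f pgp [x02_13, x02_34, x34_02, x34_01] (f x14_02))
      + (SS f pgp [x01_23, x01_24, x24_01] (f x02_13) + SS f pgp [x01_23, x01_24, x24_01] (f x14_02) + SS f pgp [x02_13, x02_14, x14_02] (f x01_23) + SS f pgp [x02_13, x02_14, x14_02] (f x24_01))
      + (SS f pgp [x01_23, x01_24, x24_01] (f x02_13) + SS f pgp [x01_23, x01_24, x24_01] (f x34_01) + SS f pgp [x02_13, x02_34, x34_02, x34_01] (f x01_23) + SS f pgp [x02_13, x02_34, x34_02, x34_01] (f x24_01))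
      + (SS f pgp [x01_23, x01_34, x34_01] (f x02_13) + SS f pgp [x01_23, x01_34, x34_01] (f x14_02) + SS f pgp [x02_13, x02_14, x14_02] (f x01_23) + SS f pgp [x02_13, x02_14, x14_02] (f x34_01))
      + (SS f pgp [x01_23, x01_34, x34_01] (f x02_13) + SS f pgp [x01_23, x01_34, x34_01] (f x24_01) + SS f pgp [x02_13, x13_02, x13_24, x24_13, x24_01] (f x01_23) + SS f pgp [x02_13, x13_02, x13_24, x24_13, x24_01] (f x34_01))
      + (SS f pgp [x01_23, x23_01, x23_14, x14_23, x14_02] (f x03_12) + SS f pgp [x01_23, x23_01, x23_14, x14_23, x14_02] (f x24_01) + SS f pgp [x03_12, x03_24, x24_03, x24_01] (f x01_23) + SS f pgp [x03_12, x03_24, x24_03, x24_01] (f x14_02))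
      + (SS f pgp [x01_23, x23_01, x23_14, x14_23, x14_02] (f x03_12) + SS f pgp [x01_23, x23_01, x23_14, x14_23, x14_02] (f x34_01) + SS f pgp [x03_12, x12_03, x12_34, x34_12, x34_01] (f x01_23) + SS f pgp [x03_12, x12_03, x12_34, x34_12, x34_01] (f x14_02))
      + (SS f pgp [x01_23, x01_24, x24_01] (f x03_12) + SS f pgp [x01_23, x01_24, x24_01] (f x14_02) + SS f pgp [x03_12, x03_14, x14_03, x14_02] (f x01_23) + SS f pgp [x03_12, x03_14, x14_03, x14_02] (f x24_01))
      + (SS f pgp [x01_23, x01_24, x24_01] (f x03_12) + SS f pgp [x01_23, x01_24, x24_01] (f x34_01) + SS f pgp [x03_12, x12_03, x12_34, x34_12, x34_01] (f x01_23) + SS f pgp [x03_12, x12_03, x12_34, x34_12, x34_01] (f x24_01))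
      + (SS f pgp [x01_23, x01_34, x34_01] (f x03_12) + SS f pgp [x01_23, x01_34, x34_01] (f x14_02) + SS f pgp [x03_12, x03_14, x14_03, x14_02] (f x01_23) + SS f pgp [x03_12, x03_14, x14_03, x14_02] (f x34_01))
      + (SS f pgp [x01_23, x01_34, x34_01] (f x03_12) + SS f pgp [x01_23, x01_34, x34_01] (f x24_01) + SS f pgp [x03_12, x03_24, x24_03, x24_01] (f x01_23) + SS f pgp [x03_12, x03_24, x24_03, x24_01] (f x34_01))
      + (SS f pgp [x02_13, x02_14, x14_02] (f x03_12) + SS f pgp [x02_13, x02_14, x14_02] (f x24_01) + SS f pgp [x03_12, x03_24, x24_03, x24_01] (f x02_13) + SS f pgp [x03_12, x03_24, x24_03, x24_01] (f x14_02))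
      + (SS f pgp [x02_13, x02_14, x14_02] (f x03_12) + SS f pgp [x02_13, x02_14, x14_02] (f x34_01) + SS f pgp [x03_12, x12_03, x12_34, x34_12, x34_01] (f x02_13) + SS f pgp [x03_12, x12_03, x12_34, x34_12, x34_01] (f x14_02))
      + (SS f pgp [x02_13, x13_02, x13_24, x24_13, x24_01] (f x03_12) + SS f pgp [x02_13, x13_02, x13_24, x24_13, x24_01] (f x14_02) + SS f pgp [x03_12, x03_14, x14_03, x14_02] (f x02_13) + SS f pgp [x03_12, x03_14, x14_03, x14_02] (f x24_01))
      + (SS f pgp [x02_13, x13_02, x13_24, x24_13, x24_01] (f x03_12) + SS f pgp [x02_13, x13_02, x13_24, x24_13, x24_01] (f x34_01) + SS f pgp [x03_12, x12_03, x12_34, x34_12, x34_01] (f x02_13) + SS f pgp [x03_12, x12_03, x12_34, x34_12, x34_01] (f x24_01))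
      + (SS f pgp [x02_13, x02_34, x34_02, x34_01] (f x03_12) + SS f pgp [x02_13, x02_34, x34_02, x34_01] (f x14_02) + SS f pgp [x03_12, x03_14, x14_03, x14_02] (f x02_13) + SS f pgp [x03_12, x03_14, x14_03, x14_02] (f x34_01))
      + (SS f pgp [x02_13, x02_34, x34_02, x34_01] (f x03_12) + SS f pgp [x02_13, x02_34, x34_02, x34_01] (f x24_01) + SS f pgp [x03_12, x03_24, x24_03, x24_01] (f x02_13) + SS f pgp [x03_12, x03_24, x24_03, x24_01] (f x34_01)) = 0 := by
    ring_nf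
    simp [show (2 : ZMod 2) = 0 from rfl]
  rw [hSzero] at hk
  exact absurd hk (by decide)

/-! ### Assembly -/

lemma mono {V : Type*} {G : SimpleGraph V} {k m : ℕ} (hkm : k ≤ m)
    (h : HasBookEmbedding G k) : HasBookEmbedding G m := by
  obtain ⟨f, page, hinj, hnone, hcross⟩ := h
  have hcinj : Function.Injective (Fin.castLE hkm) :=
    fun x y hxy => Fin.ext (by simpa using congrArg Fin.val hxy)
  refine ⟨f, fun e => (page e).map (Fin.castLE hkm), hinj, ?_, ?_⟩
  · intro e he
    have he0 : Option.map (Fin.castLE hkm) (page e) = none := he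
    have he' : page e = none := by
      rcases hmm : page e with _ | p
      · rfl
      · rw [hmm] at he0; simp at he0
    exact hnone e he'
  · intro e e' hs hp
    have hs0 : (Option.map (Fin.castLE hkm) (page e)).isSome = true := hs
    have hs' : (page e).isSome := by
      rcases hmm : page e with _ | p
      · rw [hmm] at hs0; simp at hs0
      · rfl
    exact hcross e e' hs' (Option.map_injective hcinj hp)

theorem stmt12 :
    pageNumber (completeExpansion (SimpleGraph.fromRel
      (fun a b : {s : Finset (Fin 5) // s.card = 2} => Disjoint a.1 b.1))) = 3 := by
  show pageNumber GG = 3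
  have h3 : HasBookEmbedding GG 3 := upper
  have h2 : ¬ HasBookEmbedding GG 2 := no2
  unfold pageNumber
  apply le_antisymm
  · exact Nat.sInf_le h3
  · by_contra hlt
    push_neg at hlt
    have hne : {k | HasBookEmbedding GG k}.Nonempty := ⟨3, h3⟩
    have hmem := Nat.sInf_mem hne
    have hle : sInf {k | HasBookEmbedding GG k} ≤ 2 := by omega
    exact h2 (mono hle hmem)
end

section
/- Let m ≥ 1 be a natural number and let K_{2m+1} be the complete graph on 2m+1 vertices. Then m ≤ pn(E_c(K_{2m+1})) ≤ m + 1, where E_c denotes the complete expansion graph and pn denotes the pagenumber. -/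
open SimpleGraph

namespace Stmt14Aux

lemma mod_decomp (nn X K : ℕ) (h0 : 0 < nn) (hX : X < K * nn) :
    ∃ k < K, nn * k ≤ X ∧ X % nn = X - nn * k := by
  refine ⟨X / nn, ?_, ?_, ?_⟩
  · exact (Nat.div_lt_iff_lt_mul h0).2 hX
  · exact Nat.mul_div_le X nn
  · have := Nat.div_add_mod X nn; omega

lemma lemA (nn t a b c d : ℕ) (h0 : 0 < nn) (h1 : a < b) (h2 : b < c) (h3 : c < d)
    (h4 : d < nn) (ht : t < 2 * nn)
    (hpg : (t + (a + c)) % nn / 2 = (t + (b + d)) % nn / 2) : False := by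
  obtain ⟨k1, hk1, hle1, he1⟩ := mod_decomp nn (t + (a + c)) 4 h0 (by omega)
  obtain ⟨k2, hk2, hle2, he2⟩ := mod_decomp nn (t + (b + d)) 4 h0 (by omega)
  have m1 : (t + (a + c)) % nn < nn := Nat.mod_lt _ h0
  have m2 : (t + (b + d)) % nn < nn := Nat.mod_lt _ h0
  interval_cases k1 <;> interval_cases k2 <;> omega

lemma lemB (nn a d1 d2 d3 : ℕ) (h0 : 0 < nn) (h32 : d3 < d2) (h21 : d2 < d1)
    (h1n : d1 < nn) (h3p : 1 ≤ d3) (han : a < nn)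
    (hpg : (2 * a + (d1 + d3)) % nn / 2 = (2 * a + d2) % nn / 2) : False := by
  obtain ⟨k1, hk1, hle1, he1⟩ := mod_decomp nn (2 * a + (d1 + d3)) 4 h0 (by omega)
  obtain ⟨k2, hk2, hle2, he2⟩ := mod_decomp nn (2 * a + d2) 4 h0 (by omega)
  have m1 : (2 * a + (d1 + d3)) % nn < nn := Nat.mod_lt _ h0
  have m2 : (2 * a + d2) % nn < nn := Nat.mod_lt _ h0
  interval_cases k1 <;> interval_cases k2 <;> omega

lemma lex_lt (K a b s t : ℕ) (hs : s < K) (ht : t < K) :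
    a * K + s < b * K + t ↔ (a < b ∨ (a = b ∧ s < t)) := by
  constructor
  · intro h
    rcases lt_trichotomy a b with h' | h' | h'
    · exact Or.inl h'
    · subst h'; exact Or.inr ⟨rfl, by exact lt_of_add_lt_add_left h⟩
    · exfalso
      have hba : b + 1 ≤ a := h'
      have h5 : (b + 1) * K ≤ a * K := Nat.mul_le_mul_right K hba
      have h6 : b * K + K ≤ a * K := by rwa [add_one_mul] at h5
      omega
  · intro h
    rcases h with h' | ⟨h', h''⟩
    · have h5 : (a + 1) * K ≤ b * K := Nat.mul_le_mul_right K h'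
      have h6 : a * K + K ≤ b * K := by rwa [add_one_mul] at h5
      omega
    · subst h'; omega




abbrev VV (m : ℕ) := IncidencePair (⊤ : SimpleGraph (Fin (2 * m + 1)))

variable {m : ℕ}

def nuF (x : VV m) : Fin (2 * m + 1) := x.val.1
def omF (x : VV m) : Fin (2 * m + 1) := Sym2.Mem.other' x.2.2
def nu (x : VV m) : ℕ := (nuF x : ℕ)
def om (x : VV m) : ℕ := (omF x : ℕ)
def dd (x : VV m) : ℕ := (om x + (2 * m + 1) - nu x) % (2 * m + 1)
def ff (x : VV m) : ℕ := nu x * (2 * m) + (2 * m - dd x)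

lemma spec (x : VV m) : s(nuF x, omF x) = x.val.2 := Sym2.other_spec' x.2.2

lemma omF_ne (x : VV m) : omF x ≠ nuF x := by
  have h := Sym2.other_ne (SimpleGraph.not_isDiag_of_mem_edgeSet _ x.2.1) x.2.2
  rwa [Sym2.other_eq_other'] at h

lemma nu_lt (x : VV m) : nu x < 2 * m + 1 := (nuF x).is_lt
lemma om_lt (x : VV m) : om x < 2 * m + 1 := (omF x).is_lt
lemma om_ne_nu (x : VV m) : om x ≠ nu x := fun h => omF_ne x (Fin.val_injective h)

lemma dd_calc_lt (x : VV m) (h : nu x < om x) : dd x = om x - nu x := by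
  unfold dd
  have h1 : om x + (2 * m + 1) - nu x = (om x - nu x) + (2 * m + 1) := by omega
  rw [h1, Nat.add_mod_right, Nat.mod_eq_of_lt (by have := om_lt x; omega)]

lemma dd_calc_gt (x : VV m) (h : om x < nu x) : dd x = (2 * m + 1) + om x - nu x := by
  unfold dd
  have h1 : om x + (2 * m + 1) - nu x = (2 * m + 1) + om x - nu x := by omega
  rw [h1, Nat.mod_eq_of_lt (by have := nu_lt x; omega)]

lemma dd_bounds (x : VV m) : 1 ≤ dd x ∧ dd x ≤ 2 * m := by
  have h1 := om_ne_nu x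
  have h2 := om_lt x
  have h3 := nu_lt x
  rcases lt_or_gt_of_ne h1 with h | h
  · rw [dd_calc_gt x h]; omega
  · rw [dd_calc_lt x h]; omega

lemma omod (x : VV m) : (nu x + dd x) % (2 * m + 1) = om x := by
  unfold dd
  rw [Nat.add_mod, Nat.mod_mod, ← Nat.add_mod]
  have h1 : nu x + (om x + (2 * m + 1) - nu x) = om x + (2 * m + 1) := by
    have := nu_lt x; omega
  rw [h1, Nat.add_mod_right, Nat.mod_eq_of_lt (om_lt x)]

/-- reconstruct a vertex from its ν and d data -/
lemma eq_of_nu_dd (x y : VV m) (h1 : nu x = nu y) (h2 : dd x = dd y) : x = y := by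
  have hom : om x = om y := by rw [← omod x, ← omod y, h1, h2]
  have hnuF : nuF x = nuF y := Fin.val_injective h1
  have homF : omF x = omF y := Fin.val_injective hom
  apply Subtype.ext
  apply Prod.ext
  · exact hnuF
  · rw [← spec x, ← spec y, hnuF, homF]

lemma ff_inj : Function.Injective (ff (m := m)) := by
  intro x y h
  have hx := dd_bounds x; have hy := dd_bounds y
  unfold ff at h
  have hnu : nu x = nu y := by
    by_contra hne
    rcases lt_or_gt_of_ne hne with h' | h'
    · have := (lex_lt (2 * m) (nu x) (nu y) (2 * m - dd x) (2 * m - dd y)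
        (by omega) (by omega)).2 (Or.inl h')
      omega
    · have := (lex_lt (2 * m) (nu y) (nu x) (2 * m - dd y) (2 * m - dd x)
        (by omega) (by omega)).2 (Or.inl h')
      omega
  refine eq_of_nu_dd x y hnu ?_
  rw [hnu] at h
  omega

lemma ff_lt_iff (x y : VV m) (hm : 1 ≤ m) :
    ff x < ff y ↔ (nu x < nu y ∨ (nu x = nu y ∧ dd y < dd x)) := by
  have hx := dd_bounds x; have hy := dd_bounds y
  unfold ff
  rw [lex_lt (2 * m) _ _ _ _ (by omega) (by omega)]
  constructor
  · rintro (h | ⟨h, h'⟩)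
    · exact Or.inl h
    · exact Or.inr ⟨h, by omega⟩
  · rintro (h | ⟨h, h'⟩)
    · exact Or.inl h
    · exact Or.inr ⟨h, by omega⟩

lemma adj_cases {x y : VV m}
    (h : (completeExpansion (⊤ : SimpleGraph (Fin (2 * m + 1)))).Adj x y) :
    (nuF x = nuF y ∧ omF x ≠ omF y) ∨ (nuF x = omF y ∧ nuF y = omF x) := by
  rw [completeExpansion, SimpleGraph.fromRel_adj] at h
  obtain ⟨hne, h2⟩ := h
  have h2' : x.val.1 = y.val.1 ∨ x.val.2 = y.val.2 := by
    rcases h2 with (h | h) | (h | h)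
    exacts [Or.inl h, Or.inr h, Or.inl h.symm, Or.inr h.symm]
  by_cases hfst : x.val.1 = y.val.1
  · left
    refine ⟨hfst, fun hom => hne ?_⟩
    refine Subtype.ext (Prod.ext hfst ?_)
    rw [← spec x, ← spec y]
    rw [show nuF x = nuF y from hfst, hom]
  · right
    have hsnd : x.val.2 = y.val.2 := h2'.resolve_left hfst
    have hss : s(nuF x, omF x) = s(nuF y, omF y) := by rw [spec x, spec y]; exact hsnd
    rw [Sym2.eq_iff] at hss
    rcases hss with ⟨ha, hb⟩ | ⟨ha, hb⟩
    · exact absurd ha hfst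
    · exact ⟨ha, hb.symm⟩

def pg (x y : VV m) : ℕ :=
  if x.val.1 = y.val.1 then (om x + om y) % (2 * m + 1) / 2
  else (nu x + nu y) % (2 * m + 1) / 2

lemma pg_symm (x y : VV m) : pg x y = pg y x := by
  unfold pg
  by_cases h : x.val.1 = y.val.1
  · rw [if_pos h, if_pos h.symm, Nat.add_comm]
  · rw [if_neg h, if_neg (fun h' => h h'.symm), Nat.add_comm]

lemma pg_lt (x y : VV m) : pg x y < m + 1 := by
  unfold pg
  have h1 : (om x + om y) % (2 * m + 1) < 2 * m + 1 := Nat.mod_lt _ (by omega)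
  have h2 : (nu x + nu y) % (2 * m + 1) < 2 * m + 1 := Nat.mod_lt _ (by omega)
  by_cases h : x.val.1 = y.val.1 <;> simp only [if_pos, if_neg, h, if_true, if_false] <;> omega

lemma key_clique (u v : VV m) (huv : nu u = nu v) :
    (om u + om v) % (2 * m + 1) = (2 * nu u + (dd u + dd v)) % (2 * m + 1) := by
  conv_lhs => rw [← omod u, ← omod v]
  rw [← Nat.add_mod]
  congr 1
  omega

lemma key_match (z : VV m) : (nu z + om z) % (2 * m + 1) = (2 * nu z + dd z) % (2 * m + 1) := by
  conv_lhs => rw [← omod z]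
  rw [Nat.add_mod, Nat.mod_mod, ← Nat.add_mod]
  congr 1
  omega

lemma same_block_chain (hm : 1 ≤ m) {x z y : VV m} (hxy : nu x = nu y)
    (h1 : ff x < ff z) (h2 : ff z < ff y) :
    nu z = nu x ∧ dd z < dd x ∧ dd y < dd z := by
  rw [ff_lt_iff _ _ hm] at h1 h2
  rcases h1 with h | ⟨e, d⟩ <;> rcases h2 with h' | ⟨e', d'⟩ <;>
    exact ⟨by omega, by omega, by omega⟩

lemma same_block_lt (hm : 1 ≤ m) {y w : VV m} (he : nu y = nu w) (h : ff y < ff w) :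
    dd w < dd y := by
  rw [ff_lt_iff _ _ hm] at h
  rcases h with h | ⟨e, d⟩ <;> omega

lemma match_lt (hm : 1 ≤ m) {x y : VV m} (hxy : nu x = om y) (hyx : nu y = om x)
    (h : ff x < ff y) : nu x < nu y := by
  rw [ff_lt_iff _ _ hm] at h
  have h1 := om_ne_nu x
  rcases h with h | ⟨e, d⟩
  · exact h
  · exfalso; apply h1; omega

lemma noncross (hm : 1 ≤ m) {x y z w : VV m}
    (hxy : (completeExpansion (⊤ : SimpleGraph (Fin (2 * m + 1)))).Adj x y)
    (hzw : (completeExpansion (⊤ : SimpleGraph (Fin (2 * m + 1)))).Adj z w)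
    (hpg : pg x y = pg z w)
    (h1 : ff x < ff z) (h2 : ff z < ff y) (h3 : ff y < ff w) : False := by
  have hnn : 0 < 2 * m + 1 := by omega
  have hbx := dd_bounds x; have hby := dd_bounds y
  have hbz := dd_bounds z; have hbw := dd_bounds w
  have hnx := nu_lt x; have hny := nu_lt y; have hnz := nu_lt z; have hnw := nu_lt w
  unfold pg at hpg
  rcases adj_cases hxy with ⟨exy, oxy⟩ | ⟨mx, my⟩ <;>
    rcases adj_cases hzw with ⟨ezw, ozw⟩ | ⟨mz, mw⟩
  · -- clique, clique
    have exy' : nu x = nu y := congrArg Fin.val exy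
    have ezw' : nu z = nu w := congrArg Fin.val ezw
    obtain ⟨hz, d1, d2⟩ := same_block_chain hm exy' h1 h2
    have d3 : dd w < dd y := same_block_lt hm (by omega) h3
    have exyc : x.val.1 = y.val.1 := exy
    have ezwc : z.val.1 = w.val.1 := ezw
    rw [if_pos exyc, if_pos ezwc, key_clique x y exy', key_clique z w ezw', hz] at hpg
    rw [Nat.add_comm (dd x) (dd y), Nat.add_comm (dd z) (dd w)] at hpg
    exact lemA (2 * m + 1) (2 * nu x) (dd w) (dd y) (dd z) (dd x) hnn d3 d2 d1
      (by omega) (by omega) hpg.symm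
  · -- clique, matching
    have exy' : nu x = nu y := congrArg Fin.val exy
    have mz' : nu z = om w := congrArg Fin.val mz
    have mw' : nu w = om z := congrArg Fin.val mw
    obtain ⟨hz, d1, d2⟩ := same_block_chain hm exy' h1 h2
    have hzwne : ¬ (z.val.1 = w.val.1) := by
      intro h
      have : nu z = nu w := congrArg Fin.val h
      exact om_ne_nu z (by omega)
    have exyc : x.val.1 = y.val.1 := exy
    rw [if_pos exyc, if_neg hzwne, key_clique x y exy', mw', key_match z, hz] at hpg
    rw [Nat.add_comm (dd x) (dd y)] at hpg
    exact lemB (2 * m + 1) (nu x) (dd x) (dd z) (dd y) hnn d2 d1 (by omega) (by omega)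
      (by omega) (by rw [Nat.add_comm (dd y) (dd x)] at hpg; exact hpg)
  · -- matching, clique
    have mx' : nu x = om y := congrArg Fin.val mx
    have my' : nu y = om x := congrArg Fin.val my
    have ezw' : nu z = nu w := congrArg Fin.val ezw
    obtain ⟨hy, d1, d2⟩ := same_block_chain hm ezw' h2 h3
    have hxyne : ¬ (x.val.1 = y.val.1) := by
      intro h
      have : nu x = nu y := congrArg Fin.val h
      exact om_ne_nu x (by omega)
    have ezwc : z.val.1 = w.val.1 := ezw
    rw [if_neg hxyne, if_pos ezwc, mx', key_clique z w ezw'] at hpg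
    rw [Nat.add_comm (om y) (nu y)] at hpg
    rw [key_match y, hy] at hpg
    exact lemB (2 * m + 1) (nu z) (dd z) (dd y) (dd w) hnn d2 d1 (by omega) (by omega)
      (by omega) hpg.symm
  · -- matching, matching
    have mx' : nu x = om y := congrArg Fin.val mx
    have my' : nu y = om x := congrArg Fin.val my
    have mz' : nu z = om w := congrArg Fin.val mz
    have mw' : nu w = om z := congrArg Fin.val mw
    have hxy_lt : nu x < nu y := match_lt hm mx' my' (lt_trans h1 h2)
    have hzw_lt : nu z < nu w := match_lt hm mz' mw' (lt_trans h2 h3)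
    have e1 : dd x = nu y - nu x := by
      have := dd_calc_lt x (by omega); omega
    have e2 : dd y = (2 * m + 1) + nu x - nu y := by
      have := dd_calc_gt y (by omega); omega
    have e3 : dd z = nu w - nu z := by
      have := dd_calc_lt z (by omega); omega
    have e4 : dd w = (2 * m + 1) + nu z - nu w := by
      have := dd_calc_gt w (by omega); omega
    have hxyne : ¬ (x.val.1 = y.val.1) := by
      intro h; have : nu x = nu y := congrArg Fin.val h; omega
    have hzwne : ¬ (z.val.1 = w.val.1) := by
      intro h; have : nu z = nu w := congrArg Fin.val h; omega
    rw [if_neg hxyne, if_neg hzwne] at hpg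
    have hd1 := (ff_lt_iff x z hm).1 h1
    have hd2 := (ff_lt_iff z y hm).1 h2
    have hd3 := (ff_lt_iff y w hm).1 h3
    rcases hd1 with p1 | ⟨p1, q1⟩ <;> rcases hd2 with p2 | ⟨p2, q2⟩ <;>
      rcases hd3 with p3 | ⟨p3, q3⟩
    · exact lemA (2 * m + 1) 0 (nu x) (nu z) (nu y) (nu w) hnn p1 p2 p3 (by omega)
        (by omega) (by simpa using hpg)
    all_goals omega

def PG (x y : VV m) : Fin (m + 1) := ⟨pg x y, pg_lt x y⟩

lemma PG_symm (x y : VV m) : PG x y = PG y x := by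
  unfold PG; exact Fin.ext (pg_symm x y)

lemma upper (m : ℕ) (hm : 1 ≤ m) :
    HasBookEmbedding (completeExpansion (⊤ : SimpleGraph (Fin (2 * m + 1)))) (m + 1) := by
  refine ⟨ff, fun e => some (Sym2.lift ⟨PG, PG_symm⟩ e.val), ff_inj, ?_, ?_⟩
  · intro e he
    simp at he
  · intro e e' _ hpg hcross
    obtain ⟨a, b, c, d, hab, hcd, hac, hcb, hbd⟩ := hcross
    have hA : (completeExpansion (⊤ : SimpleGraph (Fin (2 * m + 1)))).Adj a b := by
      have h := e.2
      rw [show (e : Sym2 (VV m)) = s(a, b) from hab] at h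
      exact (SimpleGraph.mem_edgeSet _).1 h
    have hB : (completeExpansion (⊤ : SimpleGraph (Fin (2 * m + 1)))).Adj c d := by
      have h := e'.2
      rw [show (e' : Sym2 (VV m)) = s(c, d) from hcd] at h
      exact (SimpleGraph.mem_edgeSet _).1 h
    have hpg' : pg a b = pg c d := by
      simp only [hab, hcd, Sym2.lift_mk, Option.some.injEq] at hpg
      exact congrArg Fin.val hpg
    exact noncross hm hA hB hpg' hac hcb hbd

def uvert (m : ℕ) (j : Fin (2 * m)) : VV m :=
  ⟨((0 : Fin (2 * m + 1)), s((0 : Fin (2 * m + 1)), j.succ)),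
    (SimpleGraph.mem_edgeSet _).2 ((SimpleGraph.top_adj _ _).2 (Fin.succ_ne_zero j).symm),
    Sym2.mem_mk_left _ _⟩

lemma uvert_inj (m : ℕ) : Function.Injective (uvert m) := by
  intro i j h
  have h2 : s((0 : Fin (2 * m + 1)), i.succ) = s((0 : Fin (2 * m + 1)), j.succ) :=
    congrArg (fun x : VV m => x.val.2) h
  rw [Sym2.congr_right] at h2
  exact Fin.succ_injective _ h2

lemma uvert_adj (m : ℕ) {i j : Fin (2 * m)} (hij : i ≠ j) :
    (completeExpansion (⊤ : SimpleGraph (Fin (2 * m + 1)))).Adj (uvert m i) (uvert m j) := by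
  rw [completeExpansion, SimpleGraph.fromRel_adj]
  exact ⟨fun h => hij (uvert_inj m h), Or.inl (Or.inl rfl)⟩

lemma lower_ge2 (m k : ℕ) (hm : 2 ≤ m)
    (hk : HasBookEmbedding (completeExpansion (⊤ : SimpleGraph (Fin (2 * m + 1)))) k) :
    m ≤ k := by
  obtain ⟨f, page, hinj, hnone, hcross⟩ := hk
  set F : Fin (2 * m) → ℕ := f ∘ uvert m with hF
  have hFinj : Function.Injective F := hinj.comp (uvert_inj m)
  set σ := Tuple.sort F with hσ
  have hg : StrictMono (F ∘ σ) :=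
    (Tuple.monotone_sort F).strictMono_of_injective (hFinj.comp σ.injective)
  let i1 : Fin m → Fin (2 * m) := fun i => ⟨i.val, by omega⟩
  let i2 : Fin m → Fin (2 * m) := fun i => ⟨i.val + m, by omega⟩
  have hne : ∀ i : Fin m, σ (i1 i) ≠ σ (i2 i) := by
    intro i h
    have := σ.injective h
    have := congrArg Fin.val this
    simp [i1, i2] at this
    omega
  let E : Fin m → (completeExpansion (⊤ : SimpleGraph (Fin (2 * m + 1)))).edgeSet :=
    fun i => ⟨s(uvert m (σ (i1 i)), uvert m (σ (i2 i))),
      (SimpleGraph.mem_edgeSet _).2 (uvert_adj m (hne i))⟩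
  have hflt : ∀ (a b : Fin (2 * m)), a < b → f (uvert m (σ a)) < f (uvert m (σ b)) := by
    intro a b hab
    exact hg hab
  have hsome : ∀ i : Fin m, page (E i) ≠ none := by
    intro i h
    obtain ⟨a, b, hab, hab2, hbet⟩ := hnone (E i) h
    have hab' : s(uvert m (σ (i1 i)), uvert m (σ (i2 i))) = s(a, b) := hab
    rw [Sym2.eq_iff] at hab'
    have hi12 : (i1 i) < (i2 i) := by
      rw [Fin.mk_lt_mk]; omega
    rcases hab' with ⟨ha, hb⟩ | ⟨ha, hb⟩
    · -- a is left endpoint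
      have hmid : (⟨i.val + 1, by omega⟩ : Fin (2 * m)) < i2 i := by
        rw [Fin.mk_lt_mk]; have := i.is_lt; omega
      have hmid' : i1 i < (⟨i.val + 1, by omega⟩ : Fin (2 * m)) := by
        rw [Fin.mk_lt_mk]; omega
      refine hbet (uvert m (σ ⟨i.val + 1, by omega⟩)) ⟨?_, ?_⟩
      · rw [← ha]; exact hflt _ _ hmid'
      · rw [← hb]; exact hflt _ _ hmid
    · -- swapped: contradiction with f a < f b
      rw [← ha, ← hb] at hab2
      exact absurd hab2 (by have := hflt _ _ hi12; omega)
  have claim : ∀ i j : Fin m, i < j → page (E i) ≠ page (E j) := by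
    intro i j hij hpq
    refine hcross (E i) (E j) (Option.isSome_iff_ne_none.2 (hsome i)) hpq ?_
    refine ⟨uvert m (σ (i1 i)), uvert m (σ (i2 i)), uvert m (σ (i1 j)), uvert m (σ (i2 j)),
      rfl, rfl, ?_, ?_, ?_⟩
    · exact hflt _ _ (by rw [Fin.mk_lt_mk]; exact hij)
    · exact hflt _ _ (by rw [Fin.mk_lt_mk]; have := j.is_lt; omega)
    · exact hflt _ _ (by rw [Fin.mk_lt_mk]; omega)
  let P : Fin m → Fin k := fun i => (page (E i)).get (Option.isSome_iff_ne_none.2 (hsome i))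
  have hPinj : Function.Injective P := by
    intro i j hPij
    by_contra hij
    have hpage : page (E i) = page (E j) := by
      have ha := Option.some_get (Option.isSome_iff_ne_none.2 (hsome i))
      have hb := Option.some_get (Option.isSome_iff_ne_none.2 (hsome j))
      rw [← ha, ← hb]
      exact congrArg some hPij
    rcases lt_or_gt_of_ne (fun h => hij h) with h | h
    · exact claim i j h hpage
    · exact claim j i h hpage.symm
  simpa using Fintype.card_le_of_injective P hPinj

def mk6 {m : ℕ} (a b : Fin (2 * m + 1)) (h : a ≠ b) : VV m :=
  ⟨(a, s(a, b)), (SimpleGraph.mem_edgeSet _).2 ((SimpleGraph.top_adj _ _).2 h),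
    Sym2.mem_mk_left _ _⟩

lemma mk6_ne_fst {m : ℕ} {a b a' b' : Fin (2 * m + 1)} {h : a ≠ b} {h' : a' ≠ b'}
    (hne : a ≠ a') : mk6 a b h ≠ mk6 a' b' h' := by
  intro he
  exact hne (congrArg (fun x : VV m => x.val.1) he)

lemma mk6_ne_snd {m : ℕ} {a b b' : Fin (2 * m + 1)} {h : a ≠ b} {h' : a ≠ b'}
    (hne : b ≠ b') : mk6 a b h ≠ mk6 a b' h' := by
  intro he
  have h2 : s(a, b) = s(a, b') := congrArg (fun x : VV m => x.val.2) he
  rw [Sym2.congr_right] at h2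
  exact hne h2

lemma mk6_adj_clique {m : ℕ} {a b b' : Fin (2 * m + 1)} {h : a ≠ b} {h' : a ≠ b'}
    (hne : b ≠ b') :
    (completeExpansion (⊤ : SimpleGraph (Fin (2 * m + 1)))).Adj (mk6 a b h) (mk6 a b' h') := by
  rw [completeExpansion, SimpleGraph.fromRel_adj]
  exact ⟨mk6_ne_snd hne, Or.inl (Or.inl rfl)⟩

lemma mk6_adj_match {m : ℕ} {a b : Fin (2 * m + 1)} {h : a ≠ b} :
    (completeExpansion (⊤ : SimpleGraph (Fin (2 * m + 1)))).Adj (mk6 a b h) (mk6 b a h.symm) := by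
  rw [completeExpansion, SimpleGraph.fromRel_adj]
  exact ⟨mk6_ne_fst h, Or.inl (Or.inr (Sym2.eq_swap))⟩

lemma lower_one (m k : ℕ) (hm : 1 ≤ m)
    (hk : HasBookEmbedding (completeExpansion (⊤ : SimpleGraph (Fin (2 * m + 1)))) k) :
    1 ≤ k := by
  by_contra hk0
  obtain rfl : k = 0 := by omega
  obtain ⟨f, page, hinj, hnone, _⟩ := hk
  have hallnone : ∀ e, page e = none := by
    intro e
    cases h : page e with
    | none => rfl
    | some v => exact v.elim0
  -- the six vertices
  have h01 : (⟨0, by omega⟩ : Fin (2 * m + 1)) ≠ ⟨1, by omega⟩ := by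
    intro h; have := congrArg Fin.val h; simp at this
  have h02 : (⟨0, by omega⟩ : Fin (2 * m + 1)) ≠ ⟨2, by omega⟩ := by
    intro h; have := congrArg Fin.val h; simp at this
  have h12 : (⟨1, by omega⟩ : Fin (2 * m + 1)) ≠ ⟨2, by omega⟩ := by
    intro h; have := congrArg Fin.val h; simp at this
  let A : VV m := mk6 ⟨0, by omega⟩ ⟨1, by omega⟩ h01
  let B : VV m := mk6 ⟨0, by omega⟩ ⟨2, by omega⟩ h02
  let C : VV m := mk6 ⟨1, by omega⟩ ⟨0, by omega⟩ h01.symm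
  let D : VV m := mk6 ⟨2, by omega⟩ ⟨0, by omega⟩ h02.symm
  let E : VV m := mk6 ⟨1, by omega⟩ ⟨2, by omega⟩ h12
  let F : VV m := mk6 ⟨2, by omega⟩ ⟨1, by omega⟩ h12.symm
  let S : Finset (VV m) := {A, B, C, D, E, F}
  obtain ⟨x0, hx0S, hx0min⟩ := Finset.exists_min_image S f ⟨A, by simp [S]⟩
  -- in every case x0 has two distinct adjacent vertices in S
  have main : ∃ y z : VV m, y ≠ z ∧ x0 ≠ y ∧ x0 ≠ z ∧
      (completeExpansion (⊤ : SimpleGraph (Fin (2 * m + 1)))).Adj x0 y ∧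
      (completeExpansion (⊤ : SimpleGraph (Fin (2 * m + 1)))).Adj x0 z ∧
      f x0 ≤ f y ∧ f x0 ≤ f z := by
    have hA : A ∈ S := by simp [S]
    have hB : B ∈ S := by simp [S]
    have hC : C ∈ S := by simp [S]
    have hD : D ∈ S := by simp [S]
    have hE : E ∈ S := by simp [S]
    have hF : F ∈ S := by simp [S]
    simp only [S, Finset.mem_insert, Finset.mem_singleton] at hx0S
    rcases hx0S with rfl | rfl | rfl | rfl | rfl | rfl
    · exact ⟨B, C, mk6_ne_fst h01, mk6_ne_snd h12, mk6_ne_fst h01,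
        mk6_adj_clique h12, mk6_adj_match, hx0min B hB, hx0min C hC⟩
    · exact ⟨A, D, mk6_ne_fst h02, mk6_ne_snd h12.symm, mk6_ne_fst h02,
        mk6_adj_clique h12.symm, mk6_adj_match, hx0min A hA, hx0min D hD⟩
    · exact ⟨A, E, mk6_ne_fst h01, mk6_ne_fst h01.symm, mk6_ne_snd h02,
        mk6_adj_match, mk6_adj_clique h02, hx0min A hA, hx0min E hE⟩
    · exact ⟨B, F, mk6_ne_fst h02, mk6_ne_fst h02.symm, mk6_ne_snd h01,
        mk6_adj_match, mk6_adj_clique h01, hx0min B hB, hx0min F hF⟩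
    · exact ⟨C, F, mk6_ne_fst h12, mk6_ne_snd h02.symm, mk6_ne_fst h12,
        mk6_adj_clique h02.symm, mk6_adj_match, hx0min C hC, hx0min F hF⟩
    · exact ⟨D, E, mk6_ne_fst h12.symm, mk6_ne_snd h01.symm, mk6_ne_fst h12.symm,
        mk6_adj_clique h01.symm, mk6_adj_match, hx0min D hD, hx0min E hE⟩
  obtain ⟨y, z, hyz, hxy, hxz, hady, hadz, hfy, hfz⟩ := main
  have hfy' : f x0 < f y := lt_of_le_of_ne hfy (fun h => hxy (hinj h))
  have hfz' : f x0 < f z := lt_of_le_of_ne hfz (fun h => hxz (hinj h))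
  let e1 : (completeExpansion (⊤ : SimpleGraph (Fin (2 * m + 1)))).edgeSet :=
    ⟨s(x0, y), (SimpleGraph.mem_edgeSet _).2 hady⟩
  let e2 : (completeExpansion (⊤ : SimpleGraph (Fin (2 * m + 1)))).edgeSet :=
    ⟨s(x0, z), (SimpleGraph.mem_edgeSet _).2 hadz⟩
  obtain ⟨a1, b1, hab1, hf1, hbet1⟩ := hnone e1 (hallnone e1)
  obtain ⟨a2, b2, hab2, hf2, hbet2⟩ := hnone e2 (hallnone e2)
  have hab1' : s(x0, y) = s(a1, b1) := hab1
  have hab2' : s(x0, z) = s(a2, b2) := hab2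
  rw [Sym2.eq_iff] at hab1' hab2'
  have hc1 : a1 = x0 ∧ b1 = y := by
    rcases hab1' with ⟨ha, hb⟩ | ⟨ha, hb⟩
    · exact ⟨ha.symm, hb.symm⟩
    · exfalso; rw [← ha, ← hb] at hf1; omega
  have hc2 : a2 = x0 ∧ b2 = z := by
    rcases hab2' with ⟨ha, hb⟩ | ⟨ha, hb⟩
    · exact ⟨ha.symm, hb.symm⟩
    · exfalso; rw [← ha, ← hb] at hf2; omega
  obtain ⟨rfl, rfl⟩ := hc1
  obtain ⟨rfl, rfl⟩ := hc2
  have hfyz : f b1 ≠ f b2 := fun h => hyz (hinj h)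
  rcases lt_or_gt_of_ne hfyz with h | h
  · exact hbet2 b1 ⟨hfy', h⟩
  · exact hbet1 b2 ⟨hfz', h⟩

end Stmt14Aux


theorem stmt14 (m : ℕ) (hm : 1 ≤ m) :
    m ≤ pageNumber (completeExpansion (⊤ : SimpleGraph (Fin (2 * m + 1)))) ∧
    pageNumber (completeExpansion (⊤ : SimpleGraph (Fin (2 * m + 1)))) ≤ m + 1 := by
  have hmem : (m + 1) ∈ {k | HasBookEmbedding
      (completeExpansion (⊤ : SimpleGraph (Fin (2 * m + 1)))) k} := Stmt14Aux.upper m hm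
  constructor
  · apply le_csInf ⟨m + 1, hmem⟩
    intro k hk
    rcases eq_or_lt_of_le hm with h1 | h2
    · exact h1 ▸ Stmt14Aux.lower_one m k hm hk
    · exact Stmt14Aux.lower_ge2 m k (by omega) hk
  · exact Nat.sInf_le hmem
end

section
/- Let n ≥ 3 be a natural number and let C_n be the cycle graph on n vertices. Then the complete expansion graph E_c(C_n) is isomorphic to the cycle graph C_{2n} on 2n vertices; consequently pn(E_c(C_n)) = pn(C_n) = 1, where pn denotes the pagenumber. -/
open SimpleGraph

private lemma mod2 {a n : ℕ} (h : a < 2*n) :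
    a % n = if a < n then a else a - n := by
  split
  · exact Nat.mod_eq_of_lt ‹_›
  · rw [Nat.mod_eq_sub_mod (by omega), Nat.mod_eq_of_lt (by omega)]
private lemma val_add_one {n : ℕ} [NeZero n] (hn : 2 ≤ n) (w : Fin n) :
    (w + 1).val = (w.val + 1) % n := by
  rw [Fin.add_def, Fin.val_one' n]
  simp only [Fin.val_mk]
  rw [Nat.mod_eq_of_lt (show (1:ℕ) < n by omega)]
private lemma cycleAdj_val {n : ℕ} (hn : 2 ≤ n) {u v : Fin n} :
    (cycleGraph n).Adj u v ↔ u.val = (v.val + 1) % n ∨ v.val = (u.val + 1) % n := by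
  rw [cycleGraph_adj']
  have hu := u.isLt; have hv := v.isLt
  rw [Fin.sub_def, Fin.sub_def]
  simp only [Fin.val_mk]
  rw [mod2 (by omega), mod2 (by omega), mod2 (by omega), mod2 (by omega)]
  split_ifs <;> omega
private lemma add_one_ne {n : ℕ} [NeZero n] (hn : 2 ≤ n) (w : Fin n) : w + 1 ≠ w := by
  have := w.isLt
  rw [Ne, Fin.ext_iff, val_add_one hn, mod2 (by omega)]
  split_ifs <;> omega
private lemma add_two_ne {n : ℕ} [NeZero n] (hn : 3 ≤ n) (w : Fin n) : w + 1 + 1 ≠ w := by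
  have h1 := w.isLt
  have e2 : (w + 1 + 1).val = (w.val + 2) % n := by
    rw [val_add_one (by omega), val_add_one (by omega), Nat.mod_add_mod]
  rw [Ne, Fin.ext_iff, e2, mod2 (by omega)]
  split_ifs <;> omega
private lemma edge_form {n : ℕ} [NeZero n] (hn : 2 ≤ n) {e : Sym2 (Fin n)}
    (he : e ∈ (cycleGraph n).edgeSet) : ∃ w : Fin n, e = s(w, w + 1) := by
  induction e using Sym2.ind with
  | _ u v =>
    rw [SimpleGraph.mem_edgeSet, cycleAdj_val hn] at he
    rcases he with h | h
    · refine ⟨v, ?_⟩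
      rw [Sym2.eq_iff]
      exact Or.inr ⟨Fin.ext (by rw [val_add_one hn]; exact h), rfl⟩
    · refine ⟨u, ?_⟩
      rw [Sym2.eq_iff]
      exact Or.inl ⟨rfl, Fin.ext (by rw [val_add_one hn]; exact h)⟩
private lemma cycle_adj_succ {n : ℕ} [NeZero n] (hn : 2 ≤ n) (w : Fin n) :
    (cycleGraph n).Adj w (w + 1) := by
  rw [cycleAdj_val hn]
  right; exact val_add_one hn w

section Iso
variable {n : ℕ} [NeZero n]

private lemma pair_form (hn : 3 ≤ n) (p : IncidencePair (cycleGraph n)) :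
    ∃ w : Fin n, p.1.2 = s(w, w + 1) ∧ (p.1.1 = w ∨ p.1.1 = w + 1) := by
  obtain ⟨w, hw⟩ := edge_form (by omega) p.2.1
  refine ⟨w, hw, ?_⟩
  have h := p.2.2
  rw [hw, Sym2.mem_iff] at h
  exact h

private def ceTo (p : IncidencePair (cycleGraph n)) : Fin (2*n) :=
  ⟨(2 * p.1.1.val + if p.1.1 + 1 ∈ p.1.2 then 0 else 2*n - 1) % (2*n),
    Nat.mod_lt _ (by have := Nat.pos_of_neZero n; omega)⟩

private def ceFrom (hn : 3 ≤ n) (j : Fin (2*n)) : IncidencePair (cycleGraph n) :=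
  ⟨((if j.val % 2 = 0 then (⟨j.val / 2, by have := j.isLt; omega⟩ : Fin n)
      else (⟨j.val / 2, by have := j.isLt; omega⟩ : Fin n) + 1),
    s((⟨j.val / 2, by have := j.isLt; omega⟩ : Fin n),
      (⟨j.val / 2, by have := j.isLt; omega⟩ : Fin n) + 1)),
    (cycleGraph n).mem_edgeSet.mpr (cycle_adj_succ (by omega) _),
    by
      dsimp only
      split
      · exact Sym2.mem_iff.mpr (Or.inl rfl)
      · exact Sym2.mem_iff.mpr (Or.inr rfl)⟩

private lemma ceFrom_fst (hn : 3 ≤ n) (j : Fin (2*n)) :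
    (ceFrom hn j).1.1 = if j.val % 2 = 0 then (⟨j.val / 2, by have := j.isLt; omega⟩ : Fin n)
      else (⟨j.val / 2, by have := j.isLt; omega⟩ : Fin n) + 1 := rfl

private lemma ceFrom_snd (hn : 3 ≤ n) (j : Fin (2*n)) :
    (ceFrom hn j).1.2 = s((⟨j.val / 2, by have := j.isLt; omega⟩ : Fin n),
      (⟨j.val / 2, by have := j.isLt; omega⟩ : Fin n) + 1) := rfl

private lemma ceTo_even (hn : 3 ≤ n) (p : IncidencePair (cycleGraph n)) (w : Fin n)
    (hw : p.1.2 = s(w, w + 1)) (hv : p.1.1 = w) : (ceTo p).val = 2 * w.val := by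
  have hwlt := w.isLt
  have hcond : w + 1 ∈ p.1.2 := by rw [hw, Sym2.mem_iff]; right; rfl
  show (2 * p.1.1.val + if p.1.1 + 1 ∈ p.1.2 then 0 else 2*n - 1) % (2*n) = 2 * w.val
  rw [hv, if_pos hcond, Nat.mod_eq_of_lt (by omega)]
  omega

private lemma ceTo_odd (hn : 3 ≤ n) (p : IncidencePair (cycleGraph n)) (w : Fin n)
    (hw : p.1.2 = s(w, w + 1)) (hv : p.1.1 = w + 1) : (ceTo p).val = 2 * w.val + 1 := by
  have hwlt := w.isLt
  have hcond : ¬ (w + 1 + 1 ∈ p.1.2) := by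
    rw [hw, Sym2.mem_iff]
    rintro (h | h)
    · exact add_two_ne hn w h
    · exact add_one_ne (by omega) w (add_right_cancel h)
  show (2 * p.1.1.val + if p.1.1 + 1 ∈ p.1.2 then 0 else 2*n - 1) % (2*n) = 2 * w.val + 1
  rw [hv, if_neg hcond, val_add_one (by omega) w]
  rcases Nat.lt_or_ge (w.val + 1) n with h | h
  · rw [Nat.mod_eq_of_lt h, mod2 (by omega)]
    split_ifs <;> omega
  · have h0 : (w.val + 1) % n = 0 := by
      rw [show w.val + 1 = n by omega, Nat.mod_self]
    rw [h0, Nat.mod_eq_of_lt (by omega)]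
    omega

private lemma ce_adj_iff (hn : 3 ≤ n) (p q : IncidencePair (cycleGraph n)) (w w' : Fin n)
    (hpw : p.1.2 = s(w, w + 1)) (hqw : q.1.2 = s(w', w' + 1)) :
    (completeExpansion (cycleGraph n)).Adj p q ↔
      ((p.1.1 = q.1.1 ∨ w = w') ∧ ¬(p.1.1 = q.1.1 ∧ w = w')) := by
  have hee : (p.1.2 = q.1.2) ↔ w = w' := by
    rw [hpw, hqw, Sym2.eq_iff]
    constructor
    · rintro (⟨h, -⟩ | ⟨h1, h2⟩)
      · exact h
      · exact absurd (by rw [← h1]; exact h2 : w' + 1 + 1 = w') (add_two_ne hn w')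
    · rintro rfl; exact Or.inl ⟨rfl, rfl⟩
  have hpq : p = q ↔ (p.1.1 = q.1.1 ∧ w = w') := by
    constructor
    · rintro rfl; exact ⟨rfl, hee.mp rfl⟩
    · rintro ⟨h1, h2⟩; exact Subtype.ext (Prod.ext h1 (hee.mpr h2))
  rw [completeExpansion, SimpleGraph.fromRel_adj]
  constructor
  · rintro ⟨hne, h⟩
    refine ⟨?_, fun hc => hne (hpq.mpr hc)⟩
    rcases h with (h | h) | (h | h)
    · exact Or.inl h
    · exact Or.inr (hee.mp h)
    · exact Or.inl h.symm
    · exact Or.inr (hee.mp h.symm)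
  · rintro ⟨h, hn2⟩
    refine ⟨fun hc => hn2 (hpq.mp hc), Or.inl ?_⟩
    rcases h with h | h
    · exact Or.inl h
    · exact Or.inr (hee.mpr h)

set_option maxHeartbeats 2000000 in
private noncomputable def ceIso (hn : 3 ≤ n) :
    completeExpansion (cycleGraph n) ≃g cycleGraph (2*n) := by
  have hpos := Nat.pos_of_neZero n
  refine ⟨⟨ceTo, ceFrom hn, ?_, ?_⟩, ?_⟩
  · -- left inverse
    intro p
    obtain ⟨w, hw, hv | hv⟩ := pair_form hn p
    · have hval : (ceTo p).val = 2 * w.val := ceTo_even hn p w hw hv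
      have hwlt := w.isLt
      have hwm : (⟨(ceTo p).val / 2, by have := (ceTo p).isLt; omega⟩ : Fin n) = w :=
        Fin.ext (by simp only [Fin.val_mk, hval]; omega)
      apply Subtype.ext
      apply Prod.ext
      · rw [ceFrom_fst, if_pos (show (ceTo p).val % 2 = 0 by omega), hwm, hv]
      · rw [ceFrom_snd, hwm, hw]
    · have hval : (ceTo p).val = 2 * w.val + 1 := ceTo_odd hn p w hw hv
      have hwlt := w.isLt
      have hwm : (⟨(ceTo p).val / 2, by have := (ceTo p).isLt; omega⟩ : Fin n) = w :=
        Fin.ext (by simp only [Fin.val_mk, hval]; omega)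
      apply Subtype.ext
      apply Prod.ext
      · rw [ceFrom_fst, if_neg (show ¬ ((ceTo p).val % 2 = 0) by omega), hwm, hv]
      · rw [ceFrom_snd, hwm, hw]
  · -- right inverse
    intro j
    have hjlt := j.isLt
    apply Fin.ext
    rcases Nat.even_or_odd j.val with hpar | hpar
    · have h2 : j.val % 2 = 0 := Nat.even_iff.mp hpar
      have hval : (ceTo (ceFrom hn j)).val = 2 * ((⟨j.val / 2, by omega⟩ : Fin n)).val :=
        ceTo_even hn _ _ (ceFrom_snd hn j) (by rw [ceFrom_fst, if_pos h2])
      rw [hval]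
      simp only [Fin.val_mk]
      omega
    · have h2 : ¬ (j.val % 2 = 0) := by rw [Nat.odd_iff] at hpar; omega
      have hval : (ceTo (ceFrom hn j)).val = 2 * ((⟨j.val / 2, by omega⟩ : Fin n)).val + 1 :=
        ceTo_odd hn _ _ (ceFrom_snd hn j) (by rw [ceFrom_fst, if_neg h2])
      rw [hval]
      simp only [Fin.val_mk]
      omega
  · -- adjacency
    intro p q
    obtain ⟨w, hw, hv⟩ := pair_form hn p
    obtain ⟨w', hw', hv'⟩ := pair_form hn q
    have hwlt := w.isLt
    have hwlt' := w'.isLt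
    show (cycleGraph (2*n)).Adj (ceTo p) (ceTo q) ↔ _
    rw [cycleAdj_val (by omega), ce_adj_iff hn p q w w' hw hw']
    have e2 : (w = w') ↔ (w.val = w'.val) := Fin.ext_iff
    have e3 : (w = w' + 1) ↔ (w.val = (w'.val + 1) % n) := by
      rw [Fin.ext_iff, val_add_one (by omega)]
    have e4 : (w + 1 = w') ↔ (w'.val = (w.val + 1) % n) := by
      rw [Fin.ext_iff, val_add_one (by omega), eq_comm]
    have e5 : (w + 1 = w' + 1) ↔ (w.val = w'.val) := by
      constructor
      · intro h; exact Fin.ext_iff.mp (add_right_cancel h)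
      · intro h; rw [Fin.ext h]
    rcases hv with hv | hv <;> rcases hv' with hv' | hv'
    · rw [ceTo_even hn p w hw hv, ceTo_even hn q w' hw' hv', hv, hv', e2,
        mod2 (by omega), mod2 (by omega)]
      split_ifs <;> omega
    · rw [ceTo_even hn p w hw hv, ceTo_odd hn q w' hw' hv', hv, hv', e3, e2,
        mod2 (show w'.val + 1 < 2*n by omega), mod2 (by omega), mod2 (by omega)]
      split_ifs <;> omega
    · rw [ceTo_odd hn p w hw hv, ceTo_even hn q w' hw' hv', hv, hv', e4, e2,
        mod2 (show w.val + 1 < 2*n by omega), mod2 (by omega), mod2 (by omega)]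
      split_ifs <;> omega
    · rw [ceTo_odd hn p w hw hv, ceTo_odd hn q w' hw' hv', hv, hv', e5,
        mod2 (by omega), mod2 (by omega)]
      split_ifs <;> omega

end Iso

private lemma not_edgesCross_self {V : Type*} (f : V → ℕ) (e : Sym2 V) :
    ¬ edgesCross f e e := by
  rintro ⟨a, b, c, d, hab, hcd, h1, h2, h3⟩
  rw [hab, Sym2.eq_iff] at hcd
  rcases hcd with ⟨rfl, rfl⟩ | ⟨rfl, rfl⟩ <;> omega


private lemma hbe_of_iso {V W : Type*} {G : SimpleGraph V} {H : SimpleGraph W} (φ : G ≃g H)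
    {k : ℕ} (h : HasBookEmbedding H k) : HasBookEmbedding G k := by
  obtain ⟨f, page, hinj, hsp, hcr⟩ := h
  refine ⟨f ∘ φ, fun e => page (φ.mapEdgeSet e), hinj.comp φ.toEquiv.injective, ?_, ?_⟩
  · intro e he
    obtain ⟨a, b, hab, h1, h2⟩ := hsp (φ.mapEdgeSet e) he
    have hab' : Sym2.map φ (e : Sym2 V) = s(a, b) := hab
    refine ⟨φ.symm a, φ.symm b, ?_, ?_, ?_⟩
    · have := congrArg (Sym2.map φ.symm) hab'
      rw [Sym2.map_map] at this
      simpa using this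
    · simpa using h1
    · intro c hc
      exact h2 (φ c) (by simpa using hc)
  · intro e e' hs heq hcross
    refine hcr (φ.mapEdgeSet e) (φ.mapEdgeSet e') hs heq ?_
    obtain ⟨a, b, c, d, hab, hcd, h1, h2, h3⟩ := hcross
    exact ⟨φ a, φ b, φ c, φ d, by rw [show ((φ.mapEdgeSet e : Sym2 W)) = Sym2.map φ e from rfl, hab]; rfl,
      by rw [show ((φ.mapEdgeSet e' : Sym2 W)) = Sym2.map φ e' from rfl, hcd]; rfl, h1, h2, h3⟩

private lemma pageNumber_eq_of_iso {V W : Type*} {G : SimpleGraph V} {H : SimpleGraph W}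
    (φ : G ≃g H) : pageNumber G = pageNumber H := by
  unfold pageNumber
  congr 1
  ext k
  exact ⟨fun h => hbe_of_iso φ.symm h, fun h => hbe_of_iso φ h⟩

private lemma hbe_cycle_one {n : ℕ} (hn : 3 ≤ n) : HasBookEmbedding (cycleGraph n) 1 := by
  haveI : NeZero n := ⟨by omega⟩
  classical
  set lst : Fin n := ⟨n - 1, by omega⟩ with hlst
  have h0lst : (0 : Fin n) ≠ lst := by
    rw [Ne, Fin.ext_iff]; simp [hlst]; omega
  refine ⟨Fin.val,
    fun e => if (0 : Fin n) ∈ (e : Sym2 (Fin n)) ∧ lst ∈ (e : Sym2 (Fin n)) then some 0 else none,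
    Fin.val_injective, ?_, ?_⟩
  · intro e he
    rw [ite_eq_right_iff] at he
    obtain ⟨w, hw⟩ := edge_form (by omega) e.2
    have hwlt := w.isLt
    by_cases hwl : w.val = n - 1
    · exfalso
      have hw1 : w = lst := Fin.ext (by simpa [hlst] using hwl)
      have : w + 1 = 0 := by
        rw [Fin.ext_iff, val_add_one (by omega), hwl,
          Nat.sub_add_cancel (by omega), Nat.mod_self]
        simp
      refine Option.some_ne_none (0 : Fin 1) (he ⟨?_, ?_⟩) |>.elim
      · rw [hw, Sym2.mem_iff]; right; rw [this]
      · rw [hw, Sym2.mem_iff]; left; exact hw1.symm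
    · refine ⟨w, w + 1, hw, ?_, ?_⟩
      · rw [val_add_one (by omega), Nat.mod_eq_of_lt (by omega)]; omega
      · intro c
        rw [val_add_one (by omega), Nat.mod_eq_of_lt (by omega)]
        omega
  · intro e e' hs heq hcross
    simp only at hs heq
    have key : ∀ (a : (cycleGraph n).edgeSet),
        (if (0 : Fin n) ∈ (a : Sym2 (Fin n)) ∧ lst ∈ (a : Sym2 (Fin n)) then some (0 : Fin 1) else none).isSome →
        (a : Sym2 (Fin n)) = s(0, lst) := by
      intro a ha
      split at ha
      · exact (Sym2.mem_and_mem_iff h0lst).mp ‹_›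
      · simp at ha
    have he1 := key e hs
    have he2 := key e' (by rw [← heq]; exact hs)
    rw [he1, he2] at hcross
    exact not_edgesCross_self _ _ hcross

-- L3
private lemma not_hbe_cycle_zero {n : ℕ} (hn : 3 ≤ n) : ¬ HasBookEmbedding (cycleGraph n) 0 := by
  haveI : NeZero n := ⟨by omega⟩
  rintro ⟨f, page, hinj, hspine, -⟩
  have hnone : ∀ e, page e = none := by
    intro e
    cases h : page e with
    | none => rfl
    | some x => exact x.elim0
  have H : ∀ v : Fin n, ∃ u u' : Fin n, s(v, v + 1) = s(u, u') ∧ f u < f u' ∧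
      ∀ c, ¬(f u < f c ∧ f c < f u') := by
    intro v
    have hadj : (cycleGraph n).Adj v (v + 1) := by
      rw [cycleAdj_val (by omega)]; right; exact val_add_one (by omega) v
    exact hspine ⟨s(v, v + 1), hadj⟩ (hnone _)
  choose g s hg1 hg2 hg3 using H
  -- successor uniqueness
  have succ_uniq : ∀ u y y', (f u < f y ∧ ∀ c, ¬(f u < f c ∧ f c < f y)) →
      (f u < f y' ∧ ∀ c, ¬(f u < f c ∧ f c < f y')) → y = y' := by
    rintro u y y' ⟨h1, h2⟩ ⟨h1', h2'⟩
    rcases lt_trichotomy (f y) (f y') with h | h | h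
    · exact absurd ⟨h1, h⟩ (h2' y)
    · exact hinj h
    · exact absurd ⟨h1', h⟩ (h2 y')
  -- structure of g
  have hcases : ∀ v : Fin n, (g v = v ∧ s v = v + 1) ∨ (g v = v + 1 ∧ s v = v) := by
    intro v
    have := hg1 v
    rw [Sym2.eq_iff] at this
    tauto
  have hginj : Function.Injective g := by
    intro v w hvw
    have hsv : s v = s w := succ_uniq (g v) (s v) (s w) ⟨hg2 v, hg3 v⟩
      (by rw [hvw]; exact ⟨hg2 w, hg3 w⟩)
    rcases hcases v with ⟨hv1, hv2⟩ | ⟨hv1, hv2⟩ <;>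
      rcases hcases w with ⟨hw1, hw2⟩ | ⟨hw1, hw2⟩
    · rw [← hv1, ← hw1, hvw]
    · -- g v = v, s v = v+1 ; g w = w+1, s w = w : v = w+1, v+1 = w
      exfalso
      have h1 : v = w + 1 := by rw [← hv1, hvw, hw1]
      have h2 : v + 1 = w := by rw [← hv2, hsv, hw2]
      exact add_two_ne hn w (by rw [← h1]; exact h2)
    · exfalso
      have h1 : v + 1 = w := by rw [← hv1, hvw, hw1]
      have h2 : v = w + 1 := by rw [← hv2, hsv, hw2]
      exact add_two_ne hn v (by rw [h1]; exact h2.symm)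
    · have : v + 1 = w + 1 := by rw [← hv1, hvw, hw1]
      exact add_right_cancel this
  have hgsurj : Function.Surjective g := Finite.injective_iff_surjective.mp hginj
  obtain ⟨v0, hv0⟩ := Finite.exists_max f
  obtain ⟨v, hv⟩ := hgsurj v0
  have h1 : f (g v) < f (s v) := hg2 v
  have h2 : f (s v) ≤ f v0 := hv0 (s v)
  rw [hv] at h1
  omega


private lemma pageNumber_cycle {n : ℕ} (hn : 3 ≤ n) : pageNumber (cycleGraph n) = 1 := by
  have h1 : 1 ∈ {k | HasBookEmbedding (cycleGraph n) k} := hbe_cycle_one hn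
  refine le_antisymm (Nat.sInf_le h1) ?_
  rcases Nat.eq_zero_or_pos (sInf {k | HasBookEmbedding (cycleGraph n) k}) with h | h
  · rw [Nat.sInf_eq_zero] at h
    rcases h with h | h
    · exact absurd h (not_hbe_cycle_zero hn)
    · exact absurd h1 (h ▸ Set.notMem_empty 1)
  · exact h


theorem stmt16 (n : ℕ) (hn : 3 ≤ n) :
    Nonempty (completeExpansion (cycleGraph n) ≃g cycleGraph (2 * n)) ∧
    pageNumber (completeExpansion (cycleGraph n)) = 1 ∧
    pageNumber (cycleGraph n) = 1 := by
  haveI : NeZero n := ⟨by omega⟩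
  refine ⟨⟨ceIso hn⟩, ?_, pageNumber_cycle hn⟩
  rw [pageNumber_eq_of_iso (ceIso hn)]
  exact pageNumber_cycle (by omega)
end

section
/- Let n ≥ 2 be a natural number and let P_n be the path graph on n vertices. Then the complete expansion graph E_c(P_n) is isomorphic to the path graph on 2(n-1) vertices; consequently pn(E_c(P_n)) = pn(P_n) = 0, where pn denotes the pagenumber. -/
open SimpleGraph

lemma path_book (m : ℕ) : HasBookEmbedding (pathGraph m) 0 := by
  refine ⟨Fin.val, fun _ => none, Fin.val_injective, ?_, ?_⟩
  · rintro ⟨e, he⟩ _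
    induction e using Sym2.ind with
    | _ u v =>
      rw [mem_edgeSet, pathGraph_adj] at he
      rcases he with h | h
      · exact ⟨u, v, rfl, by omega, fun c => by omega⟩
      · exact ⟨v, u, Sym2.eq_swap, by omega, fun c => by omega⟩
  · intro e e' hs
    simp at hs

lemma iso_book_zero {V W : Type*} {G : SimpleGraph V} {H : SimpleGraph W} (φ : G ≃g H)
    (h : HasBookEmbedding H 0) : HasBookEmbedding G 0 := by
  obtain ⟨f, page, hinj, hspine, -⟩ := h
  have hnone : ∀ x, page x = none := by
    intro x; cases hx : page x with
    | none => rfl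
    | some k => exact k.elim0
  refine ⟨f ∘ φ, fun _ => none, hinj.comp φ.toEquiv.injective, ?_, ?_⟩
  · rintro ⟨e, he⟩ _
    induction e using Sym2.ind with
    | _ u v =>
      rw [mem_edgeSet] at he
      have he' : s(φ u, φ v) ∈ H.edgeSet := by rw [mem_edgeSet]; exact φ.map_adj_iff.mpr he
      obtain ⟨a, b, hab, hfab, hbet⟩ := hspine ⟨_, he'⟩ (hnone _)
      rw [Sym2.eq_iff] at hab
      rcases hab with ⟨ha, hb⟩ | ⟨ha, hb⟩
      · exact ⟨u, v, rfl, by simpa [ha, hb] using hfab,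
          fun c => by simpa [ha, hb] using hbet (φ c)⟩
      · exact ⟨v, u, Sym2.eq_swap, by simpa [ha, hb] using hfab,
          fun c => by simpa [ha, hb] using hbet (φ c)⟩
  · intro e e' hs
    simp at hs

lemma path_edge_rep {n : ℕ} {e : Sym2 (Fin n)} (he : e ∈ (pathGraph n).edgeSet) :
    ∃ (i : ℕ) (h : i + 1 < n), e = s(⟨i, by omega⟩, ⟨i + 1, h⟩) := by
  induction e using Sym2.ind with
  | _ u v =>
    rw [mem_edgeSet, pathGraph_adj] at he
    rcases he with h | h
    · refine ⟨u.val, by omega, ?_⟩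
      rw [Sym2.eq_iff]
      exact Or.inl ⟨Fin.ext rfl, Fin.ext h.symm⟩
    · refine ⟨v.val, by omega, ?_⟩
      rw [Sym2.eq_swap, Sym2.eq_iff]
      exact Or.inl ⟨Fin.ext rfl, Fin.ext h.symm⟩

def pairOf (n : ℕ) (m : Fin (2 * (n - 1))) : IncidencePair (pathGraph n) :=
  ⟨(⟨m.val / 2 + m.val % 2, by have := m.2; omega⟩,
    s(⟨m.val / 2, by have := m.2; omega⟩, ⟨m.val / 2 + 1, by have := m.2; omega⟩)),
   (pathGraph n).mem_edgeSet.mpr (pathGraph_adj.mpr (Or.inl rfl)),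
   by simp only [Sym2.mem_iff, Fin.mk.injEq]; omega⟩

lemma pairOf_injective (n : ℕ) : Function.Injective (pairOf n) := by
  intro m1 m2 h
  have h1 := m1.2; have h2 := m2.2
  simp only [pairOf, Subtype.mk.injEq, Prod.mk.injEq, Fin.mk.injEq, Sym2.eq_iff] at h
  exact Fin.ext (by omega)

lemma pairOf_surjective (n : ℕ) : Function.Surjective (pairOf n) := by
  rintro ⟨⟨v, e⟩, he, hv⟩
  obtain ⟨i, hi, rfl⟩ := path_edge_rep he
  rw [Sym2.mem_iff] at hv
  rcases hv with rfl | rfl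
  · refine ⟨⟨2 * i, by omega⟩, Subtype.ext ?_⟩
    simp only [pairOf, Prod.mk.injEq, Sym2.eq_iff, Fin.mk.injEq]
    omega
  · refine ⟨⟨2 * i + 1, by omega⟩, Subtype.ext ?_⟩
    simp only [pairOf, Prod.mk.injEq, Sym2.eq_iff, Fin.mk.injEq]
    omega

noncomputable def pathExpIso (n : ℕ) :
    pathGraph (2 * (n - 1)) ≃g completeExpansion (pathGraph n) := by
  refine ⟨Equiv.ofBijective (pairOf n) ⟨pairOf_injective n, pairOf_surjective n⟩, ?_⟩
  intro m1 m2
  show (completeExpansion (pathGraph n)).Adj (pairOf n m1) (pairOf n m2) ↔ _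
  have key : pairOf n m1 = pairOf n m2 ↔ m1 = m2 :=
    ⟨fun h => pairOf_injective n h, fun h => congrArg _ h⟩
  rw [completeExpansion, fromRel_adj, pathGraph_adj, Ne, key]
  have h1 := m1.2; have h2 := m2.2
  simp only [pairOf, Fin.mk.injEq, Sym2.eq_iff, Fin.ext_iff]
  omega

theorem stmt17 (n : ℕ) (hn : 2 ≤ n) :
    Nonempty (completeExpansion (pathGraph n) ≃g pathGraph (2 * (n - 1))) ∧
    pageNumber (completeExpansion (pathGraph n)) = 0 ∧
    pageNumber (pathGraph n) = 0 := by
  refine ⟨⟨(pathExpIso n).symm⟩, ?_, ?_⟩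
  · exact Nat.sInf_eq_zero.mpr (Or.inl (iso_book_zero (pathExpIso n).symm (path_book _)))
  · exact Nat.sInf_eq_zero.mpr (Or.inl (path_book n))
end
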